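/- arXiv:2011.05072 — 7 statements merged into one kernel-verified Lean document; each statement's English description precedes it below -/
import Mathlib

section
/- Assume that F admits a density. Then the bid v maximizes the expected utility: if there exists a < v (respectively b > v) such that F is constant on [a,v] (respectively [v,b]), then [a,v] (respectively [v,b]) is contained in the set of maximizers of b ↦ E[U_t(b)]; otherwise the set of maximizers of b ↦ E[U_t(b)] over [0,1] is exactly {v}. In either case, max_{b ∈ [0,1]} Σ_{t=1}^T E[U_t(b)] = Σ_{t=1}^T E[(v − M_t)·1{M_t ≤ v}]. -/
open MeasureTheory ProbabilityTheory Set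

/-- In the second-price auction model, if `F` admits a density then bidding the
value `v` maximizes the expected utility `b ↦ E[U_t(b)]` over `[0,1]`: any interval
`[a,v]` (resp. `[v,b]`) on which `F` is constant is contained in the set of maximizers,
and if no such interval exists the set of maximizers is exactly `{v}`.  In either case
`max_{b ∈ [0,1]} Σ_{t=1}^T E[U_t(b)] = Σ_{t=1}^T E[(v − M_t)·1{M_t ≤ v}]`. -/
theorem stmt0
    {Ω : Type*} [MeasurableSpace Ω] (μ : Measure Ω) [IsProbabilityMeasure μ]
    (V M : ℕ → Ω → ℝ) (v : ℝ) (F f : ℝ → ℝ) (T : ℕ)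
    (hVmeas : ∀ t, Measurable (V t)) (hMmeas : ∀ t, Measurable (M t))
    (hVrange : ∀ t ω, V t ω ∈ Icc (0:ℝ) 1)
    (hMrange : ∀ t ω, M t ω ∈ Icc (0:ℝ) 1)
    (hVmean : ∀ t, ∫ ω, V t ω ∂μ = v)
    (hiid : ∀ s t, Measure.map (fun ω => (V s ω, M s ω)) μ
        = Measure.map (fun ω => (V t ω, M t ω)) μ)
    (hpairindep : iIndepFun (fun t ω => (V t ω, M t ω)) μ)
    (hVM : ∀ t, IndepFun (V t) (M t) μ)
    -- F is the cumulative distribution function of the maximal opponent bids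
    (hF : ∀ t x, (μ {ω | M t ω ≤ x}).toReal = F x)
    -- F admits a density f
    (hfmeas : Measurable f) (hfnonneg : ∀ x, 0 ≤ f x)
    (hdens : ∀ x, F x = ∫ u in Iic x, f u)
    -- expected utility of a fixed bid b at round t
    (EU : ℕ → ℝ → ℝ)
    (hEU : ∀ t b, EU t b
        = ∫ ω, (V t ω - M t ω) * (if M t ω ≤ b then (1:ℝ) else 0) ∂μ) :
    ((∀ a ∈ Icc (0:ℝ) 1, a < v → (∀ x ∈ Icc a v, F x = F v) → ∀ t,
        Icc a v ⊆ {b | b ∈ Icc (0:ℝ) 1 ∧ ∀ c ∈ Icc (0:ℝ) 1, EU t c ≤ EU t b}) ∧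
     (∀ b ∈ Icc (0:ℝ) 1, v < b → (∀ x ∈ Icc v b, F x = F v) → ∀ t,
        Icc v b ⊆ {b' | b' ∈ Icc (0:ℝ) 1 ∧ ∀ c ∈ Icc (0:ℝ) 1, EU t c ≤ EU t b'}) ∧
     ((¬ ∃ a ∈ Icc (0:ℝ) 1, a < v ∧ ∀ x ∈ Icc a v, F x = F v) →
      (¬ ∃ b ∈ Icc (0:ℝ) 1, v < b ∧ ∀ x ∈ Icc v b, F x = F v) →
      ∀ t, {b | b ∈ Icc (0:ℝ) 1 ∧ ∀ c ∈ Icc (0:ℝ) 1, EU t c ≤ EU t b} = {v})) ∧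
    IsGreatest ((fun b => ∑ t ∈ Finset.Icc 1 T, EU t b) '' Icc (0:ℝ) 1)
      (∑ t ∈ Finset.Icc 1 T,
        ∫ ω, (v - M t ω) * (if M t ω ≤ v then (1:ℝ) else 0) ∂μ) := by
  classical
  -- measurability of the indicator
  have indmeas : ∀ b : ℝ, Measurable (fun x : ℝ => if x ≤ b then (1:ℝ) else 0) := by
    intro b
    exact Measurable.ite measurableSet_Iic measurable_const measurable_const
  -- integrability of bounded measurable functions
  have intOfBdd : ∀ (g : Ω → ℝ) (C : ℝ), Measurable g → (∀ ω, |g ω| ≤ C) →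
      Integrable g μ := by
    intro g C hg hC
    exact Integrable.mono' (integrable_const C) hg.aestronglyMeasurable
      (Filter.Eventually.of_forall fun ω => by simpa using hC ω)
  have hVint : ∀ t, Integrable (V t) μ := by
    intro t
    refine intOfBdd _ 1 (hVmeas t) fun ω => ?_
    rw [abs_le]; exact ⟨by linarith [(hVrange t ω).1], (hVrange t ω).2⟩
  -- v ∈ [0,1]
  have hv : v ∈ Icc (0:ℝ) 1 := by
    constructor
    · rw [← hVmean 0]
      exact integral_nonneg fun ω => (hVrange 0 ω).1
    · rw [← hVmean 0]
      calc ∫ ω, V 0 ω ∂μ ≤ ∫ _, (1:ℝ) ∂μ :=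
            integral_mono (hVint 0) (integrable_const 1) fun ω => (hVrange 0 ω).2
        _ = 1 := by simp
  -- integrability of the integrands
  have hint : ∀ t (c b : ℝ), Integrable (fun ω => (c - M t ω) *
      (if M t ω ≤ b then (1:ℝ) else 0)) μ := by
    intro t c b
    refine intOfBdd _ (|c| + 1) (((measurable_const.sub (hMmeas t)).mul
      ((indmeas b).comp (hMmeas t)))) fun ω => ?_
    have h1 := (hMrange t ω).1
    have h2 := (hMrange t ω).2
    have : |(if M t ω ≤ b then (1:ℝ) else 0)| ≤ 1 := by split <;> simp
    calc |(c - M t ω) * (if M t ω ≤ b then (1:ℝ) else 0)|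
        = |c - M t ω| * |(if M t ω ≤ b then (1:ℝ) else 0)| := abs_mul _ _
      _ ≤ (|c| + 1) * 1 := by
          apply mul_le_mul _ this (abs_nonneg _) (by positivity)
          calc |c - M t ω| ≤ |c| + |M t ω| := abs_sub _ _
            _ ≤ |c| + 1 := by rw [abs_of_nonneg h1]; linarith
      _ = |c| + 1 := mul_one _
  have hintV : ∀ t (b : ℝ), Integrable (fun ω => V t ω *
      (if M t ω ≤ b then (1:ℝ) else 0)) μ := by
    intro t b
    refine intOfBdd _ 1 ((hVmeas t).mul ((indmeas b).comp (hMmeas t))) fun ω => ?_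
    have h1 := (hVrange t ω).1
    have h2 := (hVrange t ω).2
    split <;> simp <;> rw [abs_of_nonneg h1] <;> linarith
  have hintM : ∀ t (b : ℝ), Integrable (fun ω => M t ω *
      (if M t ω ≤ b then (1:ℝ) else 0)) μ := by
    intro t b
    refine intOfBdd _ 1 ((hMmeas t).mul ((indmeas b).comp (hMmeas t))) fun ω => ?_
    have h1 := (hMrange t ω).1
    have h2 := (hMrange t ω).2
    split <;> simp <;> rw [abs_of_nonneg h1] <;> linarith
  -- key rewriting of EU using independence
  have hEU' : ∀ t b, EU t b = ∫ ω, (v - M t ω) * (if M t ω ≤ b then (1:ℝ) else 0) ∂μ := by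
    intro t b
    have hind : IndepFun (V t) (fun ω => if M t ω ≤ b then (1:ℝ) else 0) μ :=
      (hVM t).comp measurable_id (indmeas b)
    have h1 : ∫ ω, V t ω * (if M t ω ≤ b then (1:ℝ) else 0) ∂μ
        = v * ∫ ω, (if M t ω ≤ b then (1:ℝ) else 0) ∂μ := by
      have h := hind.integral_mul_eq_mul_integral (hVmeas t).aestronglyMeasurable
        (((indmeas b).comp (hMmeas t)).aestronglyMeasurable)
      have h2 : ∫ ω, V t ω * (if M t ω ≤ b then (1:ℝ) else 0) ∂μ
          = (∫ ω, V t ω ∂μ) * ∫ ω, (if M t ω ≤ b then (1:ℝ) else 0) ∂μ := h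
      rw [h2, hVmean t]
    have hintC : Integrable (fun ω => v * (if M t ω ≤ b then (1:ℝ) else 0)) μ := by
      refine intOfBdd _ (|v| + 1) (measurable_const.mul ((indmeas b).comp (hMmeas t)))
        fun ω => ?_
      have : |(if M t ω ≤ b then (1:ℝ) else 0)| ≤ 1 := by split <;> simp
      calc |v * (if M t ω ≤ b then (1:ℝ) else 0)| = |v| * |_| := abs_mul _ _
        _ ≤ |v| * 1 := mul_le_mul_of_nonneg_left this (abs_nonneg _)
        _ ≤ |v| + 1 := by linarith [abs_nonneg v]
    have e1 : (fun ω => (V t ω - M t ω) * (if M t ω ≤ b then (1:ℝ) else 0))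
        = fun ω => V t ω * (if M t ω ≤ b then (1:ℝ) else 0)
            - M t ω * (if M t ω ≤ b then (1:ℝ) else 0) := by
      funext ω; ring
    have e2 : (fun ω => (v - M t ω) * (if M t ω ≤ b then (1:ℝ) else 0))
        = fun ω => v * (if M t ω ≤ b then (1:ℝ) else 0)
            - M t ω * (if M t ω ≤ b then (1:ℝ) else 0) := by
      funext ω; ring
    rw [hEU, e1, e2, integral_sub (hintV t b) (hintM t b),
      integral_sub hintC (hintM t b), h1, integral_const_mul]
  -- v is always a maximizer
  have hmono : ∀ t c, EU t c ≤ EU t v := by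
    intro t c
    rw [hEU' t c, hEU' t v]
    refine integral_mono (hint t v c) (hint t v v) fun ω => ?_
    by_cases h1 : M t ω ≤ c <;> by_cases h2 : M t ω ≤ v <;>
      simp only [h1, h2, if_true, if_false, mul_one, mul_zero] <;> linarith
  -- difference formula
  have hdiff : ∀ t b, EU t v - EU t b = ∫ ω, (v - M t ω) *
      ((if M t ω ≤ v then (1:ℝ) else 0) - (if M t ω ≤ b then (1:ℝ) else 0)) ∂μ := by
    intro t b
    rw [hEU' t v, hEU' t b, ← integral_sub (hint t v v) (hint t v b)]
    congr 1; funext ω; ring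
  have hdiffint : ∀ t b, Integrable (fun ω => (v - M t ω) *
      ((if M t ω ≤ v then (1:ℝ) else 0) - (if M t ω ≤ b then (1:ℝ) else 0))) μ := by
    intro t b
    have : (fun ω => (v - M t ω) *
        ((if M t ω ≤ v then (1:ℝ) else 0) - (if M t ω ≤ b then (1:ℝ) else 0)))
        = fun ω => (v - M t ω) * (if M t ω ≤ v then (1:ℝ) else 0)
            - (v - M t ω) * (if M t ω ≤ b then (1:ℝ) else 0) := by
      funext ω; ring
    rw [this]
    exact (hint t v v).sub (hint t v b)
  -- measure-theoretic facts
  have hSmeas : ∀ t (x : ℝ), MeasurableSet {ω | M t ω ≤ x} := fun t x =>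
    (hMmeas t) measurableSet_Iic
  have hSsub : ∀ t (x y : ℝ), x ≤ y → {ω | M t ω ≤ x} ⊆ {ω | M t ω ≤ y} :=
    fun t x y hxy ω h => le_trans h hxy
  have hmeq : ∀ t (x y : ℝ), F x = F y → μ {ω | M t ω ≤ x} = μ {ω | M t ω ≤ y} := by
    intro t x y h
    refine (ENNReal.toReal_eq_toReal_iff' (measure_ne_top μ _) (measure_ne_top μ _)).1 ?_
    rw [hF t x, hF t y, h]
  -- F constant implies equal expected utility
  have hconst : ∀ t b, F b = F v → EU t b = EU t v := by
    intro t b hFb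
    have key : ∀ (x y : ℝ), x ≤ y → F x = F y →
        μ ({ω | M t ω ≤ y} \ {ω | M t ω ≤ x}) = 0 := by
      intro x y hxy hFxy
      rw [measure_diff (hSsub t x y hxy) (hSmeas t x).nullMeasurableSet (measure_ne_top μ _),
        hmeq t x y hFxy, tsub_self]
    have : EU t v - EU t b = 0 := by
      rw [hdiff t b]
      refine integral_eq_zero_of_ae ?_
      rw [Filter.eventuallyEq_iff_exists_mem]
      rcases le_total b v with h | h
      · refine ⟨({ω | M t ω ≤ v} \ {ω | M t ω ≤ b})ᶜ, ?_, ?_⟩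
        · rw [mem_ae_iff, compl_compl]; exact key b v h hFb
        · intro ω hω
          simp only [mem_compl_iff, mem_diff, mem_setOf_eq, not_and, not_not] at hω
          by_cases h2 : M t ω ≤ v
          · have h1 : M t ω ≤ b := hω h2
            simp [h1, h2]
          · have h1 : ¬ M t ω ≤ b := fun hh => h2 (le_trans hh h)
            simp [h1, h2]
      · refine ⟨({ω | M t ω ≤ b} \ {ω | M t ω ≤ v})ᶜ, ?_, ?_⟩
        · rw [mem_ae_iff, compl_compl]; exact key v b h hFb.symm
        · intro ω hω
          simp only [mem_compl_iff, mem_diff, mem_setOf_eq, not_and, not_not] at hω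
          by_cases h1 : M t ω ≤ b
          · have h2 : M t ω ≤ v := hω h1
            simp [h1, h2]
          · have h2 : ¬ M t ω ≤ v := fun hh => h1 (le_trans hh h)
            simp [h1, h2]
    linarith
  -- membership in the maximizer set
  have hmaxmem : ∀ t (b : ℝ), b ∈ Icc (0:ℝ) 1 → F b = F v →
      b ∈ {b | b ∈ Icc (0:ℝ) 1 ∧ ∀ c ∈ Icc (0:ℝ) 1, EU t c ≤ EU t b} := by
    intro t b hb hFb
    exact ⟨hb, fun c _ => (hmono t c).trans_eq (hconst t b hFb).symm⟩
  -- the no-atom lemma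
  have hatom : ∀ t, μ {ω | M t ω = v} = 0 := by
    intro t
    by_cases hfi : IntegrableOn f (Iic v)
    · -- F is left-continuous at v, hence μ {M < v} = μ {M ≤ v}
      set x : ℕ → ℝ := fun n => v - 1 / (n + 1) with hx
      have hxlt : ∀ n, x n < v := by
        intro n
        have : (0:ℝ) < 1 / (n + 1) := by positivity
        simp only [hx]; linarith
      have hxmono : Monotone x := by
        intro m n hmn
        have : (1:ℝ) / (n + 1) ≤ 1 / (m + 1) := by
          apply one_div_le_one_div_of_le (by positivity)
          exact_mod_cast by omega
        show v - 1 / ((m:ℝ) + 1) ≤ v - 1 / ((n:ℝ) + 1)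
        linarith
      have hmono' : Monotone fun n => Iic (x n) := fun m n hmn =>
        Iic_subset_Iic.2 (hxmono hmn)
      have hxtend : Filter.Tendsto x Filter.atTop (nhds v) := by
        have h0 : Filter.Tendsto (fun n : ℕ => 1 / ((n:ℝ) + 1)) Filter.atTop (nhds 0) :=
          tendsto_one_div_add_atTop_nhds_zero_nat
        have h1 := Filter.Tendsto.const_sub v h0
        rw [sub_zero] at h1
        exact h1
      have hUnion : (⋃ n, Iic (x n)) = Iio v := by
        ext y
        simp only [mem_iUnion, mem_Iic, mem_Iio]
        constructor
        · rintro ⟨n, hn⟩; exact lt_of_le_of_lt hn (hxlt n)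
        · intro hy
          rcases (hxtend.eventually (eventually_ge_nhds hy)).exists with ⟨n, hn⟩
          exact ⟨n, hn⟩
      -- limit of the integrals
      have h1 : Filter.Tendsto (fun n => F (x n)) Filter.atTop (nhds (F v)) := by
        have := tendsto_setIntegral_of_monotone (fun n => measurableSet_Iic) hmono'
          (by rw [hUnion]; exact hfi.mono_set Iio_subset_Iic_self)
        rw [hUnion] at this
        have hIio : (∫ u in Iio v, f u) = ∫ u in Iic v, f u :=
          (integral_Iic_eq_integral_Iio).symm
        simp only [hdens]
        rw [← hIio]
        exact this
      -- limit of the measures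
      have hUnion2 : (⋃ n, {ω | M t ω ≤ x n}) = {ω | M t ω < v} := by
        ext ω
        simp only [mem_iUnion, mem_setOf_eq]
        constructor
        · rintro ⟨n, hn⟩; exact lt_of_le_of_lt hn (hxlt n)
        · intro hy
          rcases (hxtend.eventually (eventually_ge_nhds hy)).exists with ⟨n, hn⟩
          exact ⟨n, hn⟩
      have h2 : Filter.Tendsto (fun n => (μ {ω | M t ω ≤ x n}).toReal) Filter.atTop
          (nhds ((μ {ω | M t ω < v}).toReal)) := by
        have hm : Monotone fun n => {ω | M t ω ≤ x n} := by
          intro m n hmn ω hω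
          exact le_trans (hω : M t ω ≤ x m) (hxmono hmn)
        have := tendsto_measure_iUnion_atTop (μ := μ) hm
        rw [hUnion2] at this
        exact (ENNReal.tendsto_toReal (measure_ne_top μ _)).comp this
      have heq1 : (μ {ω | M t ω < v}).toReal = F v := by
        have h1' : Filter.Tendsto (fun n => (μ {ω | M t ω ≤ x n}).toReal)
            Filter.atTop (nhds (F v)) := by
          have : ∀ n, (μ {ω | M t ω ≤ x n}).toReal = F (x n) := fun n => hF t (x n)
          simpa only [this] using h1
        exact tendsto_nhds_unique h2 h1'
      -- conclude
      have hsplit : {ω | M t ω = v} = {ω | M t ω ≤ v} \ {ω | M t ω < v} := by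
        ext ω; simp only [mem_setOf_eq, mem_diff, not_lt]
        constructor
        · intro h; exact ⟨le_of_eq h, ge_of_eq h⟩
        · intro ⟨h1, h2⟩; exact le_antisymm h1 h2
      have hmeq' : μ {ω | M t ω < v} = μ {ω | M t ω ≤ v} := by
        refine (ENNReal.toReal_eq_toReal_iff' (measure_ne_top μ _) (measure_ne_top μ _)).1 ?_
        rw [heq1, hF t v]
      have hsub' : {ω | M t ω < v} ⊆ {ω | M t ω ≤ v} := by
        intro ω h
        simp only [mem_setOf_eq] at h ⊢
        exact le_of_lt h
      have hnm : NullMeasurableSet {ω | M t ω < v} μ :=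
        ((hMmeas t) measurableSet_Iio).nullMeasurableSet
      rw [hsplit, measure_diff hsub' hnm (measure_ne_top μ _), hmeq', tsub_self]
    · -- if f is not integrable on Iic v then F v = 0 and μ {M ≤ v} = 0
      have hFv : F v = 0 := by rw [hdens]; exact integral_undef hfi
      have h0 : μ {ω | M t ω ≤ v} = 0 := by
        have := hF t v
        rw [hFv] at this
        rcases (ENNReal.toReal_eq_zero_iff _).1 this with h | h
        · exact h
        · exact absurd h (measure_ne_top μ _)
      exact measure_mono_null (fun ω h => le_of_eq h) h0
  -- a strict maximizer below/above v gives F constant on the interval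
  have hexact : ∀ t (b : ℝ), b ∈ Icc (0:ℝ) 1 →
      (∀ c ∈ Icc (0:ℝ) 1, EU t c ≤ EU t b) → b ≠ v →
      (b < v ∧ ∀ x ∈ Icc b v, F x = F v) ∨ (v < b ∧ ∀ x ∈ Icc v b, F x = F v) := by
    intro t b hb hmax hne
    have hEUeq : EU t b = EU t v := le_antisymm (hmono t b) (hmax v hv)
    have hzero : ∫ ω, (v - M t ω) *
        ((if M t ω ≤ v then (1:ℝ) else 0) - (if M t ω ≤ b then (1:ℝ) else 0)) ∂μ = 0 := by
      rw [← hdiff t b, hEUeq, sub_self]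
    rcases lt_or_gt_of_ne hne with hlt | hgt
    · -- b < v : the integrand is nonneg, so a.e. zero
      left
      refine ⟨hlt, ?_⟩
      have hnn : ∀ ω, 0 ≤ (v - M t ω) *
          ((if M t ω ≤ v then (1:ℝ) else 0) - (if M t ω ≤ b then (1:ℝ) else 0)) := by
        intro ω
        by_cases h1 : M t ω ≤ b <;> by_cases h2 : M t ω ≤ v <;>
          simp only [h1, h2, if_true, if_false] <;> nlinarith
      have hae : (fun ω => (v - M t ω) *
          ((if M t ω ≤ v then (1:ℝ) else 0) - (if M t ω ≤ b then (1:ℝ) else 0)))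
          =ᵐ[μ] 0 := by
        rw [← integral_eq_zero_iff_of_nonneg hnn (hdiffint t b)]
        exact hzero
      have hnull : μ {ω | b < M t ω ∧ M t ω < v} = 0 := by
        have hsub : {ω | b < M t ω ∧ M t ω < v} ⊆ {ω | ¬ ((v - M t ω) *
            ((if M t ω ≤ v then (1:ℝ) else 0) - (if M t ω ≤ b then (1:ℝ) else 0)) = 0)} := by
          intro ω ⟨h1, h2⟩
          have hb' : ¬ M t ω ≤ b := not_le.2 h1
          simp only [mem_setOf_eq, hb', h2.le, if_true, if_false]
          have he : (v - M t ω) * ((1:ℝ) - 0) = v - M t ω := by ring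
          rw [he]
          exact sub_ne_zero.2 h2.ne'
        have hns := ae_iff.1 hae
        simp only [Pi.zero_apply] at hns
        exact measure_mono_null hsub hns
      intro x hx
      -- {x < M ≤ v} ⊆ {b < M < v} ∪ {M = v}
      have hnull2 : μ ({ω | M t ω ≤ v} \ {ω | M t ω ≤ x}) = 0 := by
        refine measure_mono_null ?_ (measure_union_null hnull (hatom t))
        rintro ω ⟨h1, h2⟩
        have h1' : M t ω ≤ v := h1
        have h2' : x < M t ω := not_le.1 h2
        rcases lt_or_eq_of_le h1' with h | h
        · exact Or.inl ⟨lt_of_le_of_lt hx.1 h2', h⟩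
        · exact Or.inr h
      have : μ {ω | M t ω ≤ v} = μ {ω | M t ω ≤ x} := by
        have h1 : μ {ω | M t ω ≤ v} ≤ μ {ω | M t ω ≤ x} := by
          calc μ {ω | M t ω ≤ v} ≤ μ ({ω | M t ω ≤ x} ∪ ({ω | M t ω ≤ v} \ {ω | M t ω ≤ x})) :=
                measure_mono (fun ω h => by
                  by_cases hh : M t ω ≤ x
                  · exact Or.inl hh
                  · exact Or.inr ⟨h, hh⟩)
            _ ≤ μ {ω | M t ω ≤ x} + μ ({ω | M t ω ≤ v} \ {ω | M t ω ≤ x}) := measure_union_le _ _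
            _ = μ {ω | M t ω ≤ x} := by rw [hnull2, add_zero]
        exact le_antisymm h1 (measure_mono (hSsub t x v hx.2))
      rw [← hF t x, ← hF t v, this]
    · -- v < b : similarly
      right
      refine ⟨hgt, ?_⟩
      have hnn : ∀ ω, 0 ≤ (v - M t ω) *
          ((if M t ω ≤ v then (1:ℝ) else 0) - (if M t ω ≤ b then (1:ℝ) else 0)) := by
        intro ω
        by_cases h1 : M t ω ≤ v <;> by_cases h2 : M t ω ≤ b <;>
          simp only [h1, h2, if_true, if_false] <;> nlinarith
      have hae : (fun ω => (v - M t ω) *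
          ((if M t ω ≤ v then (1:ℝ) else 0) - (if M t ω ≤ b then (1:ℝ) else 0)))
          =ᵐ[μ] 0 := by
        rw [← integral_eq_zero_iff_of_nonneg hnn (hdiffint t b)]
        exact hzero
      have hnull : μ {ω | v < M t ω ∧ M t ω ≤ b} = 0 := by
        have hsub : {ω | v < M t ω ∧ M t ω ≤ b} ⊆ {ω | ¬ ((v - M t ω) *
            ((if M t ω ≤ v then (1:ℝ) else 0) - (if M t ω ≤ b then (1:ℝ) else 0)) = 0)} := by
          intro ω ⟨h1, h2⟩
          have hv' : ¬ M t ω ≤ v := not_le.2 h1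
          simp only [mem_setOf_eq, hv', h2, if_true, if_false]
          have he : (v - M t ω) * ((0:ℝ) - 1) = M t ω - v := by ring
          rw [he]
          exact sub_ne_zero.2 h1.ne'
        have hns := ae_iff.1 hae
        simp only [Pi.zero_apply] at hns
        exact measure_mono_null hsub hns
      intro x hx
      have hnull2 : μ ({ω | M t ω ≤ x} \ {ω | M t ω ≤ v}) = 0 := by
        refine measure_mono_null ?_ hnull
        rintro ω ⟨h1, h2⟩
        have h1' : M t ω ≤ x := h1
        have h2' : v < M t ω := not_le.1 h2
        exact ⟨h2', le_trans h1' hx.2⟩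
      have : μ {ω | M t ω ≤ x} = μ {ω | M t ω ≤ v} := by
        have h1 : μ {ω | M t ω ≤ x} ≤ μ {ω | M t ω ≤ v} := by
          calc μ {ω | M t ω ≤ x} ≤ μ ({ω | M t ω ≤ v} ∪ ({ω | M t ω ≤ x} \ {ω | M t ω ≤ v})) :=
                measure_mono (fun ω h => by
                  by_cases hh : M t ω ≤ v
                  · exact Or.inl hh
                  · exact Or.inr ⟨h, hh⟩)
            _ ≤ μ {ω | M t ω ≤ v} + μ ({ω | M t ω ≤ x} \ {ω | M t ω ≤ v}) := measure_union_le _ _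
            _ = μ {ω | M t ω ≤ v} := by rw [hnull2, add_zero]
        exact le_antisymm h1 (measure_mono (hSsub t v x hx.1))
      rw [← hF t x, ← hF t v, this]
  refine ⟨⟨?_, ?_, ?_⟩, ?_⟩
  · -- left interval of constancy
    intro a ha hav hc t b hb
    exact hmaxmem t b ⟨le_trans ha.1 hb.1, le_trans hb.2 hv.2⟩ (hc b hb)
  · -- right interval of constancy
    intro b hbIcc hvb hc t b' hb'
    exact hmaxmem t b' ⟨le_trans hv.1 hb'.1, le_trans hb'.2 hbIcc.2⟩ (hc b' hb')
  · -- exactness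
    intro hL hR t
    ext b
    simp only [mem_setOf_eq, mem_singleton_iff]
    constructor
    · rintro ⟨hb, hmax⟩
      by_contra hne
      rcases hexact t b hb hmax hne with ⟨hlt, hc⟩ | ⟨hgt, hc⟩
      · exact hL ⟨b, hb, hlt, hc⟩
      · exact hR ⟨b, hb, hgt, hc⟩
    · rintro rfl
      exact hmaxmem t b hv rfl
  · -- the maximum value
    constructor
    · refine ⟨v, hv, ?_⟩
      exact Finset.sum_congr rfl fun t _ => hEU' t v
    · rintro y ⟨b, hb, rfl⟩
      refine Finset.sum_le_sum fun t _ => ?_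
      rw [← hEU' t v]
      exact hmono t b
end

section
/- If F admits a density f satisfying β̲ ≤ f(x) ≤ β for all x ∈ [0,1] for some constants β̲, β > 0, then the instantaneous expected regret r(b) := E[U_t(v)] − E[U_t(b)] of any bid b ∈ [0,1] satisfies (β̲/2)(b − v)² ≤ r(b) ≤ (β/2)(b − v)². Consequently, for any sequence of bids (B_t), (β̲/2) Σ_{t=1}^T E[(B_t − v)²] ≤ R_T ≤ (β/2) Σ_{t=1}^T E[(B_t − v)²]. -/
open MeasureTheory ProbabilityTheory Set
open scoped ENNReal NNReal

private lemma aux_bdd {α : Type*} [MeasurableSpace α] {ν : Measure α} [IsFiniteMeasure ν]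
    {g : α → ℝ} {C : ℝ} (hg : AEStronglyMeasurable g ν) (hC : ∀ x, |g x| ≤ C) :
    Integrable g ν :=
  (integrable_const C).mono' hg (Filter.Eventually.of_forall fun x => by
    simpa [Real.norm_eq_abs] using hC x)

private lemma aux_int {g : ℝ → ℝ} {C : ℝ} (hg : Measurable g)
    (h0 : ∀ x, x ∉ Icc (0:ℝ) 1 → g x = 0)
    (hb : ∀ x ∈ Icc (0:ℝ) 1, |g x| ≤ C) : Integrable g := by
  have he : g = Set.indicator (Icc (0:ℝ) 1) g := by
    ext x; by_cases hx : x ∈ Icc (0:ℝ) 1 <;> simp [Set.indicator, hx, h0 x]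
  rw [he]
  refine IntegrableOn.integrable_indicator ?_ measurableSet_Icc
  refine aux_bdd (hg.aestronglyMeasurable) (C := max C 0) (fun x => ?_)
  by_cases hx : x ∈ Icc (0:ℝ) 1
  · exact le_max_of_le_left (hb x hx)
  · simp [h0 x hx]

private lemma aux_integral (a b c : ℝ) : (∫ u in a..b, c * (b - u)) = c * (b - a)^2 / 2 := by
  have h : (fun u => c * (b - u)) = fun u => c * b + (-c) * u := by funext u; ring
  rw [h, intervalIntegral.integral_add (intervalIntegrable_const)
    ((intervalIntegral.intervalIntegrable_id).const_mul _)]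
  rw [intervalIntegral.integral_const, intervalIntegral.integral_const_mul, integral_id]
  simp only [smul_eq_mul]; ring

private lemma aux_integral2 (a b c : ℝ) : (∫ u in a..b, c * (u - a)) = c * (b - a)^2 / 2 := by
  have h : (fun u => c * (u - a)) = fun u => (-(c * a)) + c * u := by funext u; ring
  rw [h, intervalIntegral.integral_add (intervalIntegrable_const)
    ((intervalIntegral.intervalIntegrable_id).const_mul _)]
  rw [intervalIntegral.integral_const, intervalIntegral.integral_const_mul, integral_id]
  simp only [smul_eq_mul]; ring

private lemma aux_core {f : ℝ → ℝ} {βlow βup v b : ℝ}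
    (hfbounds : ∀ x ∈ Icc (0:ℝ) 1, βlow ≤ f x ∧ f x ≤ βup)
    (hgint : Integrable (fun u => (v - u) * f u))
    (hv : v ∈ Icc (0:ℝ) 1) (hb : b ∈ Icc (0:ℝ) 1) :
    βlow / 2 * (b - v) ^ 2 ≤ (∫ u in Iic v, (v - u) * f u) - (∫ u in Iic b, (v - u) * f u) ∧
    (∫ u in Iic v, (v - u) * f u) - (∫ u in Iic b, (v - u) * f u) ≤ βup / 2 * (b - v) ^ 2 := by
  rw [intervalIntegral.integral_Iic_sub_Iic hgint.integrableOn hgint.integrableOn]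
  rcases le_total b v with h | h
  · have hsub : Icc b v ⊆ Icc (0:ℝ) 1 := Icc_subset_Icc hb.1 hv.2
    have hlow : (∫ u in b..v, βlow * (v - u)) ≤ ∫ u in b..v, (v - u) * f u := by
      refine intervalIntegral.integral_mono_on h
        ((continuous_const.mul (continuous_const.sub continuous_id)).intervalIntegrable _ _)
        hgint.intervalIntegrable (fun u hu => ?_)
      have h1 := (hfbounds u (hsub hu)).1
      nlinarith [hu.2, hu.1]
    have hup : (∫ u in b..v, (v - u) * f u) ≤ ∫ u in b..v, βup * (v - u) := by
      refine intervalIntegral.integral_mono_on h hgint.intervalIntegrable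
        ((continuous_const.mul (continuous_const.sub continuous_id)).intervalIntegrable _ _)
        (fun u hu => ?_)
      have h1 := (hfbounds u (hsub hu)).2
      nlinarith [hu.2, hu.1]
    rw [aux_integral b v βlow] at hlow
    rw [aux_integral b v βup] at hup
    constructor
    · calc βlow / 2 * (b - v)^2 = βlow * (v - b)^2 / 2 := by ring
        _ ≤ _ := hlow
    · calc (∫ u in b..v, (v - u) * f u) ≤ βup * (v - b)^2 / 2 := hup
        _ = βup / 2 * (b - v)^2 := by ring
  · have hsub : Icc v b ⊆ Icc (0:ℝ) 1 := Icc_subset_Icc hv.1 hb.2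
    have hflip : (∫ u in b..v, (v - u) * f u) = ∫ u in v..b, (u - v) * f u := by
      rw [intervalIntegral.integral_symm, ← intervalIntegral.integral_neg]
      congr 1; funext u; ring
    have hgint' : Integrable (fun u => (u - v) * f u) := by
      have he : (fun u => (u - v) * f u) = fun u => -((v - u) * f u) := by funext u; ring
      rw [he]; exact hgint.neg
    rw [hflip]
    have hlow : (∫ u in v..b, βlow * (u - v)) ≤ ∫ u in v..b, (u - v) * f u := by
      refine intervalIntegral.integral_mono_on h
        ((continuous_const.mul (continuous_id.sub continuous_const)).intervalIntegrable _ _)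
        hgint'.intervalIntegrable (fun u hu => ?_)
      have h1 := (hfbounds u (hsub hu)).1
      nlinarith [hu.2, hu.1]
    have hup : (∫ u in v..b, (u - v) * f u) ≤ ∫ u in v..b, βup * (u - v) := by
      refine intervalIntegral.integral_mono_on h hgint'.intervalIntegrable
        ((continuous_const.mul (continuous_id.sub continuous_const)).intervalIntegrable _ _)
        (fun u hu => ?_)
      have h1 := (hfbounds u (hsub hu)).2
      nlinarith [hu.2, hu.1]
    rw [aux_integral2 v b βlow] at hlow
    rw [aux_integral2 v b βup] at hup
    constructor
    · calc βlow / 2 * (b - v)^2 = βlow * (b - v)^2 / 2 := by ring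
        _ ≤ _ := hlow
    · calc (∫ u in v..b, (u - v) * f u) ≤ βup * (b - v)^2 / 2 := hup
        _ = βup / 2 * (b - v)^2 := by ring

/-- If `F` admits a density `f` with `β̲ ≤ f(x) ≤ β` on `[0,1]` (`β̲, β > 0`), then the
instantaneous expected regret `r(b) = E[U_t(v)] − E[U_t(b)]` of any bid `b ∈ [0,1]`
satisfies `(β̲/2)(b − v)² ≤ r(b) ≤ (β/2)(b − v)²`, and consequently, for any sequence of
bids `(B_t)`, `(β̲/2) Σ_{t=1}^T E[(B_t − v)²] ≤ R_T ≤ (β/2) Σ_{t=1}^T E[(B_t − v)²]`. -/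
theorem stmt1
    {Ω : Type*} [MeasurableSpace Ω] (μ : Measure Ω) [IsProbabilityMeasure μ]
    (V M B : ℕ → Ω → ℝ) (v : ℝ) (F f : ℝ → ℝ) (βlow βup : ℝ)
    (hβlow : 0 < βlow) (hβup : 0 < βup)
    (hVmeas : ∀ t, Measurable (V t)) (hMmeas : ∀ t, Measurable (M t))
    (hBmeas : ∀ t, Measurable (B t))
    (hVrange : ∀ t ω, V t ω ∈ Icc (0:ℝ) 1)
    (hMrange : ∀ t ω, M t ω ∈ Icc (0:ℝ) 1)
    (hBrange : ∀ t ω, B t ω ∈ Icc (0:ℝ) 1)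
    (hVmean : ∀ t, ∫ ω, V t ω ∂μ = v)
    (hiid : ∀ s t, Measure.map (fun ω => (V s ω, M s ω)) μ
        = Measure.map (fun ω => (V t ω, M t ω)) μ)
    (hpairindep : iIndepFun (fun t ω => (V t ω, M t ω)) μ)
    (hVM : ∀ t, IndepFun (V t) (M t) μ)
    -- the bid B_t depends only on past observations, hence is independent of (V_t, M_t)
    (hadapted : ∀ t, IndepFun (B t) (fun ω => (V t ω, M t ω)) μ)
    -- F is the cumulative distribution function of the maximal opponent bids
    (hF : ∀ t x, (μ {ω | M t ω ≤ x}).toReal = F x)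
    -- F admits a density f with β̲ ≤ f ≤ β on [0,1]
    (hfmeas : Measurable f)
    (hdens : ∀ x, F x = ∫ u in Iic x, f u)
    (hfbounds : ∀ x ∈ Icc (0:ℝ) 1, βlow ≤ f x ∧ f x ≤ βup)
    (hfsupp : ∀ x, x ∉ Icc (0:ℝ) 1 → f x = 0)
    -- expected utility of a fixed bid b at round t
    (EU : ℕ → ℝ → ℝ)
    (hEU : ∀ t b, EU t b
        = ∫ ω, (V t ω - M t ω) * (if M t ω ≤ b then (1:ℝ) else 0) ∂μ)
    -- expected cumulative regret
    (RT : ℕ → ℝ)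
    (hRT : ∀ T, RT T
        = sSup ((fun b => ∑ t ∈ Finset.Icc 1 T, EU t b) '' Icc (0:ℝ) 1)
          - ∑ t ∈ Finset.Icc 1 T,
              ∫ ω, (V t ω - M t ω) * (if M t ω ≤ B t ω then (1:ℝ) else 0) ∂μ) :
    (∀ t, ∀ b ∈ Icc (0:ℝ) 1,
      βlow / 2 * (b - v) ^ 2 ≤ EU t v - EU t b ∧
      EU t v - EU t b ≤ βup / 2 * (b - v) ^ 2) ∧
    (∀ T : ℕ,
      βlow / 2 * ∑ t ∈ Finset.Icc 1 T, ∫ ω, (B t ω - v) ^ 2 ∂μ ≤ RT T ∧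
      RT T ≤ βup / 2 * ∑ t ∈ Finset.Icc 1 T, ∫ ω, (B t ω - v) ^ 2 ∂μ) := by
  classical
  -- v is in [0,1]
  have hv01 : v ∈ Icc (0:ℝ) 1 := by
    rw [← hVmean 0]
    constructor
    · exact integral_nonneg (fun ω => (hVrange 0 ω).1)
    · calc ∫ ω, V 0 ω ∂μ ≤ ∫ _ω, (1:ℝ) ∂μ := by
            refine integral_mono ?_ (integrable_const 1) (fun ω => (hVrange 0 ω).2)
            exact aux_bdd (hVmeas 0).aestronglyMeasurable (C := 1)
              (fun ω => abs_le.mpr ⟨by linarith [(hVrange 0 ω).1], (hVrange 0 ω).2⟩)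
        _ = 1 := by simp
  -- the density is nonnegative and integrable
  have hf0 : ∀ x, 0 ≤ f x := by
    intro x
    by_cases hx : x ∈ Icc (0:ℝ) 1
    · exact le_trans hβlow.le (hfbounds x hx).1
    · simp [hfsupp x hx]
  have hfint : Integrable f := aux_int hfmeas hfsupp
    (fun x hx => by rw [abs_of_nonneg (hf0 x)]; exact (hfbounds x hx).2)
  have hidint : Integrable (fun u => u * f u) := by
    refine aux_int (measurable_id.mul hfmeas) (fun x hx => by simp [hfsupp x hx])
      (C := βup) (fun x hx => ?_)
    rw [abs_mul, abs_of_nonneg hx.1, abs_of_nonneg (hf0 x)]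
    calc x * f x ≤ 1 * βup := mul_le_mul hx.2 (hfbounds x hx).2 (hf0 x) zero_le_one
      _ = βup := one_mul _
  have hgint : Integrable (fun u => (v - u) * f u) := by
    refine aux_int ((measurable_const.sub measurable_id).mul hfmeas)
      (fun x hx => by simp [hfsupp x hx]) (C := βup) (fun x hx => ?_)
    rw [abs_mul, abs_of_nonneg (hf0 x)]
    have h1 : |v - x| ≤ 1 := abs_sub_le_iff.mpr
      ⟨by linarith [hv01.2, hx.1], by linarith [hx.2, hv01.1]⟩
    calc |v - x| * f x ≤ 1 * βup :=
          mul_le_mul h1 (hfbounds x hx).2 (hf0 x) zero_le_one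
      _ = βup := one_mul _
  -- the distribution of M t is the density measure
  have hmap : ∀ t, μ.map (M t) = volume.withDensity (fun x => ((f x).toNNReal : ℝ≥0∞)) := by
    intro t
    set ρ : Measure ℝ := volume.withDensity (fun x => ((f x).toNNReal : ℝ≥0∞)) with hρ
    have hcoe : ∀ u, ((f u).toNNReal : ℝ≥0∞) = ENNReal.ofReal (f u) := fun u => rfl
    have hρIic : ∀ x, ρ (Iic x) = ENNReal.ofReal (F x) := by
      intro x
      rw [hρ, withDensity_apply _ measurableSet_Iic]
      simp_rw [hcoe]
      rw [← ofReal_integral_eq_lintegral_ofReal hfint.integrableOn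
        (Filter.Eventually.of_forall fun u => hf0 u), hdens x]
    have : IsFiniteMeasure ρ := by
      constructor
      rw [hρ, withDensity_apply _ MeasurableSet.univ]
      simp_rw [hcoe, Measure.restrict_univ]
      rw [← ofReal_integral_eq_lintegral_ofReal hfint
        (Filter.Eventually.of_forall fun u => hf0 u)]
      exact ENNReal.ofReal_lt_top
    have : IsProbabilityMeasure (μ.map (M t)) := Measure.isProbabilityMeasure_map (hMmeas t).aemeasurable
    refine Measure.ext_of_Iic (μ.map (M t)) ρ (fun x => ?_)
    rw [Measure.map_apply (hMmeas t) measurableSet_Iic, hρIic x, ← hF t x,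
      ENNReal.ofReal_toReal (measure_ne_top μ _)]
    rfl
  -- closed form for the expected utility of a fixed bid
  have hEUf : ∀ t b, EU t b = ∫ u in Iic b, (v - u) * f u := by
    intro t b
    rw [hEU t b]
    have hImeas : Measurable (fun ω => if M t ω ≤ b then (1:ℝ) else 0) :=
      Measurable.ite (measurableSet_le (hMmeas t) measurable_const)
        measurable_const measurable_const
    have hIabs : ∀ ω, |(if M t ω ≤ b then (1:ℝ) else 0)| ≤ 1 := by
      intro ω; split <;> simp
    have hVI : Integrable (fun ω => V t ω * (if M t ω ≤ b then (1:ℝ) else 0)) μ := by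
      refine aux_bdd ((hVmeas t).mul hImeas).aestronglyMeasurable (C := 1) (fun ω => ?_)
      rw [abs_mul]
      calc |V t ω| * |if M t ω ≤ b then (1:ℝ) else 0| ≤ 1 * 1 := by
            refine mul_le_mul ?_ (hIabs ω) (abs_nonneg _) zero_le_one
            exact abs_le.mpr ⟨by linarith [(hVrange t ω).1], (hVrange t ω).2⟩
        _ = 1 := by ring
    have hMI : Integrable (fun ω => M t ω * (if M t ω ≤ b then (1:ℝ) else 0)) μ := by
      refine aux_bdd ((hMmeas t).mul hImeas).aestronglyMeasurable (C := 1) (fun ω => ?_)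
      rw [abs_mul]
      calc |M t ω| * |if M t ω ≤ b then (1:ℝ) else 0| ≤ 1 * 1 := by
            refine mul_le_mul ?_ (hIabs ω) (abs_nonneg _) zero_le_one
            exact abs_le.mpr ⟨by linarith [(hMrange t ω).1], (hMrange t ω).2⟩
        _ = 1 := by ring
    have hsplit : (∫ ω, (V t ω - M t ω) * (if M t ω ≤ b then (1:ℝ) else 0) ∂μ)
        = (∫ ω, V t ω * (if M t ω ≤ b then (1:ℝ) else 0) ∂μ)
          - ∫ ω, M t ω * (if M t ω ≤ b then (1:ℝ) else 0) ∂μ := by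
      rw [← integral_sub hVI hMI]
      congr 1; funext ω; ring
    have hintI : (∫ ω, (if M t ω ≤ b then (1:ℝ) else 0) ∂μ) = F b := by
      have he : (fun ω => if M t ω ≤ b then (1:ℝ) else 0)
          = Set.indicator {ω | M t ω ≤ b} (fun _ => (1:ℝ)) := by
        funext ω; by_cases h : M t ω ≤ b <;> simp [Set.indicator, h]
      rw [he, integral_indicator_const (1:ℝ) (measurableSet_le (hMmeas t) measurable_const),
        smul_eq_mul, mul_one, measureReal_def, hF t b]
    have hterm1 : (∫ ω, V t ω * (if M t ω ≤ b then (1:ℝ) else 0) ∂μ) = v * F b := by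
      have hindep : IndepFun (V t) (fun ω => if M t ω ≤ b then (1:ℝ) else 0) μ := by
        have he : (fun ω => if M t ω ≤ b then (1:ℝ) else 0)
            = (fun u => if u ≤ b then (1:ℝ) else 0) ∘ (M t) := rfl
        rw [he]
        exact (hVM t).comp measurable_id
          (Measurable.ite measurableSet_Iic measurable_const measurable_const)
      have hm := hindep.integral_mul_eq_mul_integral (hVmeas t).aestronglyMeasurable hImeas.aestronglyMeasurable
      calc (∫ ω, V t ω * (if M t ω ≤ b then (1:ℝ) else 0) ∂μ)
          = ∫ ω, (V t * fun ω => if M t ω ≤ b then (1:ℝ) else 0) ω ∂μ := rfl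
        _ = (∫ ω, V t ω ∂μ) * ∫ ω, (if M t ω ≤ b then (1:ℝ) else 0) ∂μ := hm
        _ = v * F b := by rw [hVmean t, hintI]
    have hterm2 : (∫ ω, M t ω * (if M t ω ≤ b then (1:ℝ) else 0) ∂μ)
        = ∫ u in Iic b, u * f u := by
      have hg : Measurable (fun u : ℝ => u * (if u ≤ b then (1:ℝ) else 0)) :=
        measurable_id.mul (Measurable.ite measurableSet_Iic measurable_const measurable_const)
      calc (∫ ω, M t ω * (if M t ω ≤ b then (1:ℝ) else 0) ∂μ)
          = ∫ u, u * (if u ≤ b then (1:ℝ) else 0) ∂(μ.map (M t)) := by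
            rw [integral_map (hMmeas t).aemeasurable hg.aestronglyMeasurable]
        _ = ∫ u, ((f u).toNNReal : ℝ≥0) • (u * (if u ≤ b then (1:ℝ) else 0)) := by
            rw [hmap t, integral_withDensity_eq_integral_smul hfmeas.real_toNNReal]
        _ = ∫ u, Set.indicator (Iic b) (fun u => u * f u) u := by
            congr 1; funext u
            by_cases h : u ≤ b
            · simp [Set.indicator, mem_Iic, h, NNReal.smul_def,
                Real.coe_toNNReal _ (hf0 u)]; ring
            · simp [Set.indicator, mem_Iic, h]
        _ = ∫ u in Iic b, u * f u := integral_indicator measurableSet_Iic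
    rw [hsplit, hterm1, hterm2, hdens b, ← integral_const_mul,
      ← integral_sub ((hfint.integrableOn).const_mul v) hidint.integrableOn]
    congr 1; funext u; ring
  -- the instantaneous regret bounds
  have hcore : ∀ t, ∀ b ∈ Icc (0:ℝ) 1,
      βlow / 2 * (b - v) ^ 2 ≤ EU t v - EU t b ∧
      EU t v - EU t b ≤ βup / 2 * (b - v) ^ 2 := by
    intro t b hb
    rw [hEUf t v, hEUf t b]
    exact aux_core hfbounds hgint hv01 hb
  refine ⟨hcore, ?_⟩
  -- per-round regret of the bid B t
  have hround : ∀ t,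
      βlow / 2 * (∫ ω, (B t ω - v) ^ 2 ∂μ)
        ≤ EU t v - (∫ ω, (V t ω - M t ω) * (if M t ω ≤ B t ω then (1:ℝ) else 0) ∂μ) ∧
      EU t v - (∫ ω, (V t ω - M t ω) * (if M t ω ≤ B t ω then (1:ℝ) else 0) ∂μ)
        ≤ βup / 2 * ∫ ω, (B t ω - v) ^ 2 ∂μ := by
    intro t
    set η : Measure ℝ := μ.map (B t) with hη
    set κ : Measure (ℝ × ℝ) := μ.map (fun ω => (V t ω, M t ω)) with hκ
    have hVMmeas : Measurable (fun ω => (V t ω, M t ω)) := (hVmeas t).prodMk (hMmeas t)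
    have hηP : IsProbabilityMeasure η := Measure.isProbabilityMeasure_map (hBmeas t).aemeasurable
    have hκP : IsProbabilityMeasure κ := Measure.isProbabilityMeasure_map hVMmeas.aemeasurable
    set h : ℝ × (ℝ × ℝ) → ℝ :=
      fun q => (q.2.1 - q.2.2) * (if q.2.2 ≤ q.1 then (1:ℝ) else 0) with hh
    have hmeas_h : Measurable h :=
      ((measurable_fst.comp measurable_snd).sub (measurable_snd.comp measurable_snd)).mul
        (Measurable.ite (measurableSet_le (measurable_snd.comp measurable_snd) measurable_fst)
          measurable_const measurable_const)
    have hprod : μ.map (fun ω => (B t ω, (V t ω, M t ω))) = η.prod κ :=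
      (indepFun_iff_map_prod_eq_prod_map_map (hBmeas t).aemeasurable
        hVMmeas.aemeasurable).mp (hadapted t)
    have hpairmeas : Measurable (fun ω => (B t ω, (V t ω, M t ω))) :=
      (hBmeas t).prodMk hVMmeas
    have habs : ∀ ω, |h (B t ω, (V t ω, M t ω))| ≤ 1 := by
      intro ω
      rw [hh]
      simp only [abs_mul]
      have h1 : |V t ω - M t ω| ≤ 1 := abs_sub_le_iff.mpr
        ⟨by linarith [(hVrange t ω).2, (hMrange t ω).1],
         by linarith [(hMrange t ω).2, (hVrange t ω).1]⟩
      have h2 : |if M t ω ≤ B t ω then (1:ℝ) else 0| ≤ 1 := by split <;> simp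
      calc |V t ω - M t ω| * |if M t ω ≤ B t ω then (1:ℝ) else 0| ≤ 1 * 1 :=
            mul_le_mul h1 h2 (abs_nonneg _) zero_le_one
        _ = 1 := by ring
    have hint_h : Integrable h (η.prod κ) := by
      rw [← hprod]
      rw [integrable_map_measure hmeas_h.aestronglyMeasurable hpairmeas.aemeasurable]
      exact aux_bdd (hmeas_h.comp hpairmeas).aestronglyMeasurable habs
    have hinner : ∀ b, (∫ p, h (b, p) ∂κ) = EU t b := by
      intro b
      have hsm : AEStronglyMeasurable (fun p : ℝ × ℝ => h (b, p))
          (μ.map (fun ω => (V t ω, M t ω))) :=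
        (hmeas_h.comp measurable_prodMk_left).aestronglyMeasurable
      have hmi := integral_map (f := fun p : ℝ × ℝ => h (b, p)) hVMmeas.aemeasurable hsm
      rw [hκ, hmi]
      exact (hEU t b).symm
    have hW : (∫ ω, (V t ω - M t ω) * (if M t ω ≤ B t ω then (1:ℝ) else 0) ∂μ)
        = ∫ b, EU t b ∂η := by
      calc (∫ ω, (V t ω - M t ω) * (if M t ω ≤ B t ω then (1:ℝ) else 0) ∂μ)
          = ∫ ω, h (B t ω, (V t ω, M t ω)) ∂μ := rfl
        _ = ∫ q, h q ∂(μ.map (fun ω => (B t ω, (V t ω, M t ω)))) := by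
            rw [integral_map hpairmeas.aemeasurable hmeas_h.aestronglyMeasurable]
        _ = ∫ q, h q ∂(η.prod κ) := by rw [hprod]
        _ = ∫ b, ∫ p, h (b, p) ∂κ ∂η := integral_prod h hint_h
        _ = ∫ b, EU t b ∂η := by congr 1; funext b; exact hinner b
    have hEUint : Integrable (fun b => EU t b) η :=
      hint_h.integral_prod_left.congr (Filter.Eventually.of_forall fun b => hinner b)
    have hη01 : ∀ᵐ b ∂η, b ∈ Icc (0:ℝ) 1 := by
      rw [hη]
      exact (ae_map_iff (hBmeas t).aemeasurable measurableSet_Icc).mpr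
        (Filter.Eventually.of_forall (fun ω => hBrange t ω))
    have hsm2 : AEStronglyMeasurable (fun b : ℝ => (b - v) ^ 2) (μ.map (B t)) :=
      (((continuous_id.sub continuous_const).pow 2).aestronglyMeasurable)
    have hsqint : Integrable (fun b => (b - v) ^ 2) η := by
      rw [hη]
      refine (integrable_map_measure hsm2 (hBmeas t).aemeasurable).mpr ?_
      refine aux_bdd
        ((((hBmeas t).sub measurable_const).pow measurable_const)).aestronglyMeasurable
        (C := (1 + |v|)^2) (fun ω => ?_)
      have hB : |B t ω - v| ≤ 1 + |v| := by
        refine abs_le.mpr ⟨?_, ?_⟩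
        · have := le_abs_self v; have := (hBrange t ω).1; linarith
        · have := neg_abs_le v; have := (hBrange t ω).2; linarith
      calc |(B t ω - v)^2| = |B t ω - v|^2 := abs_pow _ 2
        _ ≤ (1 + |v|)^2 := by nlinarith [abs_nonneg (B t ω - v)]
    rw [hW]
    have hdiff : EU t v - ∫ b, EU t b ∂η = ∫ b, (EU t v - EU t b) ∂η := by
      rw [integral_sub (integrable_const _) hEUint]
      simp
    have hmap2 : (∫ ω, (B t ω - v) ^ 2 ∂μ) = ∫ b, (b - v) ^ 2 ∂η := by
      rw [hη, integral_map (hBmeas t).aemeasurable hsm2]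
    constructor
    · have hmono : (∫ b, βlow / 2 * (b - v) ^ 2 ∂η) ≤ ∫ b, (EU t v - EU t b) ∂η := by
        refine integral_mono_ae (hsqint.const_mul _) ((integrable_const _).sub hEUint) ?_
        filter_upwards [hη01] with b hb
        exact (hcore t b hb).1
      rw [hdiff]
      calc βlow / 2 * ∫ ω, (B t ω - v) ^ 2 ∂μ = βlow / 2 * ∫ b, (b - v) ^ 2 ∂η := by rw [hmap2]
        _ = ∫ b, βlow / 2 * (b - v) ^ 2 ∂η := (integral_const_mul _ _).symm
        _ ≤ _ := hmono
    · have hmono : (∫ b, (EU t v - EU t b) ∂η) ≤ ∫ b, βup / 2 * (b - v) ^ 2 ∂η := by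
        refine integral_mono_ae ((integrable_const _).sub hEUint) (hsqint.const_mul _) ?_
        filter_upwards [hη01] with b hb
        exact (hcore t b hb).2
      rw [hdiff]
      calc (∫ b, (EU t v - EU t b) ∂η) ≤ ∫ b, βup / 2 * (b - v) ^ 2 ∂η := hmono
        _ = βup / 2 * ∫ b, (b - v) ^ 2 ∂η := integral_const_mul _ _
        _ = βup / 2 * ∫ ω, (B t ω - v) ^ 2 ∂μ := by rw [hmap2]
  -- the supremum is attained at b = v
  intro T
  have hsup : sSup ((fun b => ∑ t ∈ Finset.Icc 1 T, EU t b) '' Icc (0:ℝ) 1)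
      = ∑ t ∈ Finset.Icc 1 T, EU t v := by
    refine IsGreatest.csSup_eq ⟨⟨v, hv01, rfl⟩, ?_⟩
    rintro y ⟨b, hb, rfl⟩
    refine Finset.sum_le_sum (fun t _ => ?_)
    have h1 := (hcore t b hb).1
    nlinarith [sq_nonneg (b - v)]
  have hRT' : RT T = ∑ t ∈ Finset.Icc 1 T,
      (EU t v - ∫ ω, (V t ω - M t ω) * (if M t ω ≤ B t ω then (1:ℝ) else 0) ∂μ) := by
    rw [hRT T, hsup, Finset.sum_sub_distrib]
  rw [hRT']
  constructor
  · rw [Finset.mul_sum]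
    exact Finset.sum_le_sum (fun t _ => (hround t).1)
  · rw [Finset.mul_sum]
    exact Finset.sum_le_sum (fun t _ => (hround t).2)
end

section
/- For all p ∈ [0,1] and q ∈ (0,1], the Kullback–Leibler divergence between Bernoulli distributions satisfies kl(p,q) ≥ (p − q)² / (2 x̃(1 − x̃)) ≥ (p − q)² / (2 x̃), where x̃ = (p + 2q)/3. -/
open scoped ENNReal

/-- Kullback–Leibler divergence between Bernoulli distributions of means `p` and `q`,
with the conventions `0 · log 0 = 0` and `kl(p,q) = +∞` when `q ∈ {0,1}` and `p ≠ q`. -/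
noncomputable def klBer (p q : ℝ) : ℝ≥0∞ :=
  if (q = 0 ∧ p ≠ 0) ∨ (q = 1 ∧ p ≠ 1) then ⊤
  else ENNReal.ofReal (p * Real.log (p / q) + (1 - p) * Real.log ((1 - p) / (1 - q)))


lemma klBer_aux (p q : ℝ) (hp0 : 0 ≤ p) (hp1 : p ≤ 1) (hq0 : 0 < q) (hq1 : q < 1) :
    (p - q) ^ 2 / (2 * ((p + 2 * q) / 3) * (1 - (p + 2 * q) / 3))
      ≤ p * Real.log (p / q) + (1 - p) * Real.log ((1 - p) / (1 - q)) := by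
  set m : ℝ := (p + 2 * q) / 3 with hmdef
  have hm0 : 0 < m := by rw [hmdef]; linarith
  have hm1 : m < 1 := by rw [hmdef]; linarith
  set A : ℝ := 1 / (m * (1 - m)) with hA
  set c : ℝ := (2 * m - 1) / (m * (1 - m)) ^ 2 with hc
  -- tangent line inequality for convex 1/(t(1-t))
  have hbr : ∀ t : ℝ, 0 < t → t < 1 → 0 ≤ 1 / (t * (1 - t)) - (A + c * (t - m)) := by
    intro t ht0 ht1
    have h1t : (0:ℝ) < 1 - t := by linarith
    have h1m : (0:ℝ) < 1 - m := by linarith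
    have key : 1 / (t * (1 - t)) - (A + c * (t - m))
        = (t - m) ^ 2 * ((1 - t) * (1 - m) ^ 2 + t * m ^ 2)
          / (t * (1 - t) * (m * (1 - m)) ^ 2) := by
      rw [hA, hc]; field_simp; ring
    rw [key]
    apply div_nonneg
    · have : 0 ≤ (1 - t) * (1 - m) ^ 2 + t * m ^ 2 := by positivity
      positivity
    · positivity
  -- derivative of F
  have hF : ∀ t ∈ Set.uIcc q p,
      HasDerivAt (fun t : ℝ => p * Real.log t + (1 - p) * Real.log (1 - t))
        (p / t - (1 - p) / (1 - t)) t := by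
    intro t ht
    rcases eq_or_ne t 0 with rfl | ht0
    · have hp' : p = 0 := by
        rcases Set.mem_uIcc.mp ht with ⟨h, _⟩ | ⟨h, _⟩
        · linarith
        · linarith
      subst hp'
      have hsub : HasDerivAt (fun y : ℝ => 1 - y) (-1) (0:ℝ) := by
        simpa using (hasDerivAt_id (0:ℝ)).const_sub 1
      have h2 := (hsub.log (by norm_num)).const_mul (1 - (0:ℝ))
      have heq : (fun y : ℝ => (0:ℝ) * Real.log y) = fun _ => (0:ℝ) := by
        funext y; ring
      have h1 : HasDerivAt (fun y : ℝ => (0:ℝ) * Real.log y) 0 (0:ℝ) := by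
        rw [heq]; exact hasDerivAt_const _ _
      refine (h1.add h2).congr_deriv ?_
      norm_num
    rcases eq_or_ne t 1 with rfl | ht1
    · have hp' : p = 1 := by
        rcases Set.mem_uIcc.mp ht with ⟨_, h⟩ | ⟨_, h⟩
        · linarith
        · linarith
      subst hp'
      have h1 := (Real.hasDerivAt_log (one_ne_zero)).const_mul (1:ℝ)
      have heq : (fun y : ℝ => (1 - (1:ℝ)) * Real.log (1 - y)) = fun _ => (0:ℝ) := by
        funext y; ring
      have h2 : HasDerivAt (fun y : ℝ => (1 - (1:ℝ)) * Real.log (1 - y)) 0 (1:ℝ) := by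
        rw [heq]; exact hasDerivAt_const _ _
      refine (h1.add h2).congr_deriv ?_
      norm_num
    · have h1t : (1:ℝ) - t ≠ 0 := by
        intro h; exact ht1 (by linarith)
      have hsub : HasDerivAt (fun y : ℝ => 1 - y) (-1) t := by
        simpa using (hasDerivAt_id t).const_sub 1
      have h1 := (Real.hasDerivAt_log ht0).const_mul p
      have h2 := (hsub.log h1t).const_mul (1 - p)
      refine (h1.add h2).congr_deriv ?_
      field_simp
      ring
  -- derivative of G
  have hG : ∀ t : ℝ, HasDerivAt
      (fun t : ℝ => p * (A - c * m) * t + ((p * c + c * m - A) * t ^ 2 / 2 + (-c) * t ^ 3 / 3))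
      ((p - t) * (A + c * (t - m))) t := by
    intro t
    have h := ((hasDerivAt_id' t).const_mul (p * (A - c * m))).add
        ((((hasDerivAt_pow 2 t).const_mul (p * c + c * m - A)).div_const 2).add
        (((hasDerivAt_pow 3 t).const_mul (-c)).div_const 3))
    refine h.congr_deriv ?_
    norm_num
    ring
  -- combined derivative
  have hH : ∀ t ∈ Set.uIcc q p, HasDerivAt
      (fun t : ℝ => (p * Real.log t + (1 - p) * Real.log (1 - t))
        - (p * (A - c * m) * t + ((p * c + c * m - A) * t ^ 2 / 2 + (-c) * t ^ 3 / 3)))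
      ((p / t - (1 - p) / (1 - t)) - (p - t) * (A + c * (t - m))) t :=
    fun t ht => (hF t ht).sub (hG t)
  have hsign : ∀ t : ℝ, 0 < t → t < 1 →
      (p / t - (1 - p) / (1 - t)) - (p - t) * (A + c * (t - m))
        = (p - t) * (1 / (t * (1 - t)) - (A + c * (t - m))) := by
    intro t ht0 ht1
    have h1t : (1:ℝ) - t ≠ 0 := by intro h; linarith
    have ht0' : t ≠ 0 := ne_of_gt ht0
    field_simp
    ring
  have hineq : (p * Real.log q + (1 - p) * Real.log (1 - q))
        - (p * (A - c * m) * q + ((p * c + c * m - A) * q ^ 2 / 2 + (-c) * q ^ 3 / 3))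
      ≤ (p * Real.log p + (1 - p) * Real.log (1 - p))
        - (p * (A - c * m) * p + ((p * c + c * m - A) * p ^ 2 / 2 + (-c) * p ^ 3 / 3)) := by
    rcases le_total q p with hqp | hqp
    · have huIcc : Set.uIcc q p = Set.Icc q p := Set.uIcc_of_le hqp
      have hmono : MonotoneOn (fun t : ℝ => (p * Real.log t + (1 - p) * Real.log (1 - t))
          - (p * (A - c * m) * t + ((p * c + c * m - A) * t ^ 2 / 2 + (-c) * t ^ 3 / 3)))
          (Set.Icc q p) := by
        apply monotoneOn_of_deriv_nonneg (convex_Icc q p)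
        · intro t ht
          exact (hH t (huIcc ▸ ht)).continuousAt.continuousWithinAt
        · intro t ht
          rw [interior_Icc] at ht
          exact (hH t (huIcc ▸ Set.Ioo_subset_Icc_self ht)).differentiableAt.differentiableWithinAt
        · intro t ht
          rw [interior_Icc] at ht
          rw [(hH t (huIcc ▸ Set.Ioo_subset_Icc_self ht)).deriv]
          have ht0 : 0 < t := lt_trans hq0 ht.1
          have ht1 : t < 1 := lt_of_lt_of_le ht.2 hp1
          rw [hsign t ht0 ht1]
          exact mul_nonneg (by linarith [ht.2]) (hbr t ht0 ht1)
      exact hmono (Set.left_mem_Icc.mpr hqp) (Set.right_mem_Icc.mpr hqp) hqp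
    · have huIcc : Set.uIcc q p = Set.Icc p q := Set.uIcc_of_ge hqp
      have hanti : AntitoneOn (fun t : ℝ => (p * Real.log t + (1 - p) * Real.log (1 - t))
          - (p * (A - c * m) * t + ((p * c + c * m - A) * t ^ 2 / 2 + (-c) * t ^ 3 / 3)))
          (Set.Icc p q) := by
        apply antitoneOn_of_deriv_nonpos (convex_Icc p q)
        · intro t ht
          exact (hH t (huIcc ▸ ht)).continuousAt.continuousWithinAt
        · intro t ht
          rw [interior_Icc] at ht
          exact (hH t (huIcc ▸ Set.Ioo_subset_Icc_self ht)).differentiableAt.differentiableWithinAt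
        · intro t ht
          rw [interior_Icc] at ht
          rw [(hH t (huIcc ▸ Set.Ioo_subset_Icc_self ht)).deriv]
          have ht0 : 0 < t := lt_of_le_of_lt hp0 ht.1
          have ht1 : t < 1 := lt_trans ht.2 hq1
          rw [hsign t ht0 ht1]
          exact mul_nonpos_of_nonpos_of_nonneg (by linarith [ht.1]) (hbr t ht0 ht1)
      exact hanti (Set.left_mem_Icc.mpr hqp) (Set.right_mem_Icc.mpr hqp) hqp
  -- algebra: value of the polynomial difference
  have h1 : p + 2 * q ≠ 0 := by intro h; linarith
  have h2 : (3:ℝ) - (p + 2 * q) ≠ 0 := by intro h; linarith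
  have hc0 : ((-(p*m))*p + (p+m)*p^2/2 - p^3/3) - ((-(p*m))*q + (p+m)*q^2/2 - q^3/3) = 0 := by
    rw [hmdef]; ring
  have hm1' : (1:ℝ) - m ≠ 0 := by intro h; linarith
  have hGval : (p * (A - c * m) * p + ((p * c + c * m - A) * p ^ 2 / 2 + (-c) * p ^ 3 / 3))
      - (p * (A - c * m) * q + ((p * c + c * m - A) * q ^ 2 / 2 + (-c) * q ^ 3 / 3))
      = (p - q) ^ 2 / (2 * m * (1 - m)) := by
    have step1 : (p * (A - c * m) * p + ((p * c + c * m - A) * p ^ 2 / 2 + (-c) * p ^ 3 / 3))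
        - (p * (A - c * m) * q + ((p * c + c * m - A) * q ^ 2 / 2 + (-c) * q ^ 3 / 3))
        = (p - q) ^ 2 / 2 * A := by
      linear_combination c * hc0
    rw [step1, hA]
    field_simp
  -- algebra: kl expression equals F p - F q
  have hlog : ∀ a b : ℝ, b ≠ 0 → a * Real.log (a / b) = a * Real.log a - a * Real.log b := by
    intro a b hb
    rcases eq_or_ne a 0 with rfl | ha'
    · simp
    · rw [Real.log_div ha' hb]; ring
  have e1 := hlog p q (ne_of_gt hq0)
  have e2 := hlog (1 - p) (1 - q) (by intro h; linarith)
  have hgoal : (p - q) ^ 2 / (2 * m * (1 - m)) ≤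
      p * Real.log (p / q) + (1 - p) * Real.log ((1 - p) / (1 - q)) := by
    rw [e1, e2]
    linarith [hineq, hGval]
  exact hgoal

/-- For all `p ∈ [0,1]` and `q ∈ (0,1]`,
`kl(p,q) ≥ (p − q)² / (2 x̃(1 − x̃)) ≥ (p − q)² / (2 x̃)` where `x̃ = (p + 2q)/3`. -/
theorem stmt2 (p q : ℝ) (hp : p ∈ Set.Icc (0:ℝ) 1) (hq : q ∈ Set.Ioc (0:ℝ) 1) :
    ENNReal.ofReal ((p - q) ^ 2 / (2 * ((p + 2 * q) / 3) * (1 - (p + 2 * q) / 3)))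
      ≤ klBer p q ∧
    (p - q) ^ 2 / (2 * ((p + 2 * q) / 3))
      ≤ (p - q) ^ 2 / (2 * ((p + 2 * q) / 3) * (1 - (p + 2 * q) / 3)) := by
  obtain ⟨hp0, hp1⟩ := hp
  obtain ⟨hq0, hq1⟩ := hq
  constructor
  · rcases lt_or_eq_of_le hq1 with hq1' | hq1'
    · rw [klBer, if_neg (by rintro (⟨h, -⟩ | ⟨h, -⟩); exacts [hq0.ne' h, hq1'.ne h])]
      exact ENNReal.ofReal_le_ofReal (klBer_aux p q hp0 hp1 hq0 hq1')
    · subst hq1'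
      rcases eq_or_ne p 1 with rfl | hp'
      · norm_num
      · rw [klBer, if_pos (Or.inr ⟨rfl, hp'⟩)]
        exact le_top
  · set m : ℝ := (p + 2 * q) / 3 with hmdef
    have hm0 : 0 < m := by rw [hmdef]; linarith
    rcases eq_or_lt_of_le (show m ≤ 1 by rw [hmdef]; linarith) with h1 | h1
    · have hp' : p = 1 := by rw [hmdef] at h1; linarith [(by linarith : p ≤ 1)]
      have hq' : q = 1 := by rw [hmdef] at h1; linarith
      subst hp'; subst hq'
      norm_num
    · have h2 : 0 < 1 - m := by linarith
      rw [div_le_div_iff₀ (by positivity) (by positivity)]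
      nlinarith [mul_nonneg (sq_nonneg (p - q)) (sq_nonneg m)]
end

section
/- For any v ∈ [0,1] and any α ∈ (−1, 1/v − 1), the Bernoulli Kullback–Leibler divergence satisfies kl((1+α)v, v) ≥ α²v / (2(1 + α/3)). -/
open scoped ENNReal

section Aux

noncomputable def psiF (y : ℝ) : ℝ := (8 + 4*y) * Real.log (1 + y) - 8*y
noncomputable def phiF (y : ℝ) : ℝ := (6 + 2*y) * ((1 + y) * Real.log (1 + y) - y) - 3*y^2

lemma psi_hasDeriv {x : ℝ} (hx : -1 < x) :
    HasDerivAt psiF (4 * Real.log (1 + x) + (8 + 4*x) / (1 + x) - 8) x := by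
  have h1 : (0:ℝ) < 1 + x := by linarith
  have hlog : HasDerivAt (fun y : ℝ => Real.log (1 + y)) (1 / (1 + x)) x := by
    have : HasDerivAt (fun y : ℝ => 1 + y) 1 x := by
      simpa using (hasDerivAt_id x).const_add 1
    simpa using this.log h1.ne'
  have hc : HasDerivAt (fun y : ℝ => 8 + 4*y) 4 x := by
    simpa using ((hasDerivAt_id x).const_mul 4).const_add 8
  have := (hc.mul hlog).sub (((hasDerivAt_id x).const_mul 8))
  refine this.congr_deriv ?_
  ring

lemma phi_hasDeriv {x : ℝ} (hx : -1 < x) : HasDerivAt phiF (psiF x) x := by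
  have h1 : (0:ℝ) < 1 + x := by linarith
  have hlog : HasDerivAt (fun y : ℝ => Real.log (1 + y)) (1 / (1 + x)) x := by
    have : HasDerivAt (fun y : ℝ => 1 + y) 1 x := by
      simpa using (hasDerivAt_id x).const_add 1
    simpa using this.log h1.ne'
  have hone : HasDerivAt (fun y : ℝ => 1 + y) 1 x := by
    simpa using (hasDerivAt_id x).const_add 1
  have hinner : HasDerivAt (fun y : ℝ => (1 + y) * Real.log (1 + y) - y)
      (1 * Real.log (1 + x) + (1 + x) * (1 / (1 + x)) - 1) x :=
    (hone.mul hlog).sub (hasDerivAt_id x)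
  have hc : HasDerivAt (fun y : ℝ => 6 + 2*y) 2 x := by
    simpa using ((hasDerivAt_id x).const_mul 2).const_add 6
  have hsq : HasDerivAt (fun y : ℝ => 3*y^2) (3 * (2*x)) x := by
    simpa using ((hasDerivAt_pow 2 x)).const_mul 3
  have := (hc.mul hinner).sub hsq
  refine this.congr_deriv ?_
  unfold psiF
  field_simp
  ring

lemma psi_deriv_nonneg {x : ℝ} (hx : -1 < x) :
    0 ≤ 4 * Real.log (1 + x) + (8 + 4*x) / (1 + x) - 8 := by
  have h1 : (0:ℝ) < 1 + x := by linarith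
  have hl : 1 - (1 + x)⁻¹ ≤ Real.log (1 + x) := Real.one_sub_inv_le_log_of_pos h1
  have h2 : (8 + 4*x) / (1 + x) = 4 + 4 * (1 + x)⁻¹ := by field_simp; ring
  nlinarith [inv_pos.2 h1]

lemma psi_nonneg_of_nonneg {x : ℝ} (hx : 0 ≤ x) : 0 ≤ psiF x := by
  have hmono : MonotoneOn psiF (Set.Ici (0:ℝ)) := by
    apply monotoneOn_of_deriv_nonneg (convex_Ici 0)
    · intro y hy
      exact (psi_hasDeriv (by simp at hy; linarith)).continuousAt.continuousWithinAt
    · intro y hy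
      rw [interior_Ici] at hy
      exact (psi_hasDeriv (by simp at hy; linarith)).differentiableAt.differentiableWithinAt
    · intro y hy
      rw [interior_Ici] at hy
      have hy' : -1 < y := by simp at hy; linarith
      rw [(psi_hasDeriv hy').deriv]
      exact psi_deriv_nonneg hy'
  have : psiF 0 ≤ psiF x := hmono (Set.self_mem_Ici) hx hx
  simpa [psiF] using this

lemma psi_nonpos_of_nonpos {x : ℝ} (hx1 : -1 < x) (hx : x ≤ 0) : psiF x ≤ 0 := by
  have hmono : MonotoneOn psiF (Set.Ioc (-1:ℝ) 0) := by
    apply monotoneOn_of_deriv_nonneg (convex_Ioc (-1) 0)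
    · intro y hy
      exact (psi_hasDeriv hy.1).continuousAt.continuousWithinAt
    · intro y hy
      rw [interior_Ioc] at hy
      exact (psi_hasDeriv hy.1).differentiableAt.differentiableWithinAt
    · intro y hy
      rw [interior_Ioc] at hy
      rw [(psi_hasDeriv hy.1).deriv]
      exact psi_deriv_nonneg hy.1
  have : psiF x ≤ psiF 0 := hmono ⟨hx1, hx⟩ ⟨by linarith, le_refl 0⟩ hx
  simpa [psiF] using this

lemma phi_nonneg {x : ℝ} (hx : -1 < x) : 0 ≤ phiF x := by
  rcases le_or_gt 0 x with h | h
  · have hmono : MonotoneOn phiF (Set.Ici (0:ℝ)) := by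
      apply monotoneOn_of_deriv_nonneg (convex_Ici 0)
      · intro y hy
        exact (phi_hasDeriv (by simp at hy; linarith)).continuousAt.continuousWithinAt
      · intro y hy
        rw [interior_Ici] at hy
        exact (phi_hasDeriv (by simp at hy; linarith)).differentiableAt.differentiableWithinAt
      · intro y hy
        rw [interior_Ici] at hy
        have hy' : -1 < y := by simp at hy; linarith
        rw [(phi_hasDeriv hy').deriv]
        exact psi_nonneg_of_nonneg (by simp at hy; linarith)
    have : phiF 0 ≤ phiF x := hmono Set.self_mem_Ici h h
    simpa [phiF] using this
  · have hanti : AntitoneOn phiF (Set.Ioc (-1:ℝ) 0) := by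
      apply antitoneOn_of_deriv_nonpos (convex_Ioc (-1) 0)
      · intro y hy
        exact (phi_hasDeriv hy.1).continuousAt.continuousWithinAt
      · intro y hy
        rw [interior_Ioc] at hy
        exact (phi_hasDeriv hy.1).differentiableAt.differentiableWithinAt
      · intro y hy
        rw [interior_Ioc] at hy
        rw [(phi_hasDeriv hy.1).deriv]
        exact psi_nonpos_of_nonpos hy.1 hy.2.le
    have : phiF 0 ≤ phiF x := hanti ⟨hx, h.le⟩ ⟨by linarith, le_refl 0⟩ h.le
    simpa [phiF] using this

lemma key_ineq {x : ℝ} (hx : -1 < x) :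
    3 * x^2 / (6 + 2*x) ≤ (1 + x) * Real.log (1 + x) - x := by
  have h6 : (0:ℝ) < 6 + 2*x := by linarith
  rw [div_le_iff₀ h6]
  have := phi_nonneg hx
  unfold phiF at this
  nlinarith

end Aux

/-- For any `v ∈ [0,1]` and any `α ∈ (−1, 1/v − 1)`,
`kl((1+α)v, v) ≥ α²v / (2(1 + α/3))`. -/
theorem stmt3 (v α : ℝ) (hv : v ∈ Set.Icc (0:ℝ) 1)
    (hα₁ : -1 < α) (hα₂ : α < 1 / v - 1) :
    ENNReal.ofReal (α ^ 2 * v / (2 * (1 + α / 3))) ≤ klBer ((1 + α) * v) v := by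
  obtain ⟨hv0, hv1⟩ := hv
  have hv0' : 0 < v := by
    rcases hv0.lt_or_eq with h | h
    · exact h
    · exfalso; rw [← h] at hα₂; simp at hα₂; linarith
  rcases hv1.lt_or_eq with hv1' | hv1'
  · -- main case 0 < v < 1
    have h1α : (0:ℝ) < 1 + α := by linarith
    set p := (1 + α) * v with hp
    have hp0 : 0 < p := mul_pos h1α hv0'
    have hp1 : p < 1 := by
      have : 1 + α < 1 / v := by linarith
      calc p < (1/v) * v := by exact mul_lt_mul_of_pos_right this hv0'
        _ = 1 := by field_simp
    have h1v : 0 < 1 - v := by linarith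
    have h1p : 0 < 1 - p := by linarith
    rw [klBer]
    rw [if_neg (by push_neg; constructor <;> intro h <;> [skip; linarith] <;> linarith)]
    apply ENNReal.ofReal_le_ofReal
    -- first term
    have hpv : p / v = 1 + α := by field_simp [hp]; rw [hp]; ring
    have ht1 : p * Real.log (p / v) = (1 + α) * v * Real.log (1 + α) := by
      rw [hpv, hp]
    -- second term bound
    have ht2 : -(α * v) ≤ (1 - p) * Real.log ((1 - p) / (1 - v)) := by
      have hq : 0 < (1 - p) / (1 - v) := div_pos h1p h1v
      have := Real.one_sub_inv_le_log_of_pos hq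
      have hinv : ((1 - p) / (1 - v))⁻¹ = (1 - v) / (1 - p) := by
        rw [inv_div]
      rw [hinv] at this
      have h2 : (1 - p) * (1 - (1 - v) / (1 - p)) ≤ (1 - p) * Real.log ((1 - p) / (1 - v)) :=
        mul_le_mul_of_nonneg_left this h1p.le
      have h3 : (1 - p) * (1 - (1 - v) / (1 - p)) = v - p := by
        field_simp
        ring
      rw [h3] at h2
      have : v - p = -(α * v) := by rw [hp]; ring
      linarith [this ▸ h2]
    have hkey := key_ineq hα₁
    have hmul : v * (3 * α^2 / (6 + 2*α)) ≤ v * ((1 + α) * Real.log (1 + α) - α) :=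
      mul_le_mul_of_nonneg_left hkey hv0'.le
    have heq : α ^ 2 * v / (2 * (1 + α / 3)) = v * (3 * α^2 / (6 + 2*α)) := by
      have h2 : (0:ℝ) < 2 * (1 + α/3) := by linarith
      have h6 : (0:ℝ) < 6 + 2*α := by linarith
      rw [← mul_div_assoc, div_eq_div_iff h2.ne' h6.ne']
      ring
    rw [heq, ht1]
    nlinarith [hmul, ht2]
  · -- v = 1
    subst hv1'
    have hαneg : α < 0 := by norm_num at hα₂; linarith
    rw [klBer, if_pos]
    · exact le_top
    · right
      constructor
      · rfl
      · intro h
        rw [mul_one] at h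
        linarith
end

section
/- For every θ ∈ (0,1) and every ε > 0, there exists η = η_ε(θ) ∈ (0,1) such that for all θ̂, u ∈ [θ − η, θ + η] ∩ [0,1], the Bernoulli Kullback–Leibler divergence satisfies kl(θ̂, u) ≥ (u − θ̂)² / (2θ(1 − θ)(1 + ε)). -/
open scoped ENNReal

private lemma kl_quad_lower (p u a b M : ℝ) (ha : 0 < a) (hb : b < 1)
    (hp : p ∈ Set.Icc a b) (hu : u ∈ Set.Icc a b)
    (hM0 : 0 < M) (hM : ∀ t ∈ Set.Icc a b, t * (1 - t) ≤ M) :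
    (u - p) ^ 2 / (2 * M) ≤ p * Real.log (p / u) + (1 - p) * Real.log ((1 - p) / (1 - u)) := by
  obtain ⟨hpa, hpb⟩ := hp
  obtain ⟨hua, hub⟩ := hu
  have hp0 : 0 < p := lt_of_lt_of_le ha hpa
  have hp1 : p < 1 := lt_of_le_of_lt hpb hb
  have hu0 : 0 < u := lt_of_lt_of_le ha hua
  have hu1 : u < 1 := lt_of_le_of_lt hub hb
  set F : ℝ → ℝ := fun t => p * (Real.log p - Real.log t)
      + (1 - p) * (Real.log (1 - p) - Real.log (1 - t)) - (t - p) ^ 2 / (2 * M) with hF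
  have hderiv : ∀ x ∈ Set.Icc a b,
      HasDerivAt F ((x - p) * (M - x * (1 - x)) / (x * (1 - x) * M)) x := by
    intro x hx
    have hx0 : 0 < x := lt_of_lt_of_le ha hx.1
    have hx1 : x < 1 := lt_of_le_of_lt hx.2 hb
    have hx0' : x ≠ 0 := ne_of_gt hx0
    have hx1' : (1:ℝ) - x ≠ 0 := by linarith
    have h1 : HasDerivAt (fun t : ℝ => Real.log p - Real.log t) (-(x⁻¹)) x :=
      (Real.hasDerivAt_log hx0').const_sub _
    have h2i : HasDerivAt (fun t : ℝ => Real.log (1 - t)) ((1 - x)⁻¹ * (-1)) x :=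
      (Real.hasDerivAt_log hx1').comp x ((hasDerivAt_id x).const_sub 1)
    have h2 : HasDerivAt (fun t : ℝ => Real.log (1 - p) - Real.log (1 - t))
        (-((1 - x)⁻¹ * (-1))) x := h2i.const_sub _
    have h3 : HasDerivAt (fun t : ℝ => (t - p) ^ 2 / (2 * M))
        ((2 * (x - p) ^ 1 * 1) / (2 * M)) x :=
      (((hasDerivAt_id x).sub_const p).pow 2).div_const _
    have := ((h1.const_mul p).add (h2.const_mul (1 - p))).sub h3
    convert this using 1
    · rfl
    · rfl
    · rfl
    · field_simp
      ring
  have hFcont : ContinuousOn F (Set.Icc a b) := fun x hx =>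
    (hderiv x hx).continuousAt.continuousWithinAt
  have hF0 : F p = 0 := by simp [hF]
  have key : 0 ≤ F u := by
    rcases le_total p u with hle | hle
    · have hmono : MonotoneOn F (Set.Icc p u) := by
        apply monotoneOn_of_deriv_nonneg (convex_Icc p u)
          (hFcont.mono (Set.Icc_subset_Icc hpa hub))
        · intro x hx
          rw [interior_Icc] at hx
          exact ((hderiv x ⟨le_trans hpa hx.1.le, le_trans hx.2.le hub⟩).differentiableAt
            ).differentiableWithinAt
        · intro x hx
          rw [interior_Icc] at hx
          have hxm : x ∈ Set.Icc a b := ⟨le_trans hpa hx.1.le, le_trans hx.2.le hub⟩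
          rw [(hderiv x hxm).deriv]
          have hx0 : 0 < x := lt_of_lt_of_le ha hxm.1
          have hx1 : x < 1 := lt_of_le_of_lt hxm.2 hb
          apply div_nonneg
          · nlinarith [hM x hxm, hx.1]
          · have h1x : 0 < 1 - x := by linarith
            positivity
      have := hmono (Set.left_mem_Icc.2 hle) (Set.right_mem_Icc.2 hle) hle
      rw [hF0] at this; exact this
    · have hanti : AntitoneOn F (Set.Icc u p) := by
        apply antitoneOn_of_deriv_nonpos (convex_Icc u p)
          (hFcont.mono (Set.Icc_subset_Icc hua hpb))
        · intro x hx
          rw [interior_Icc] at hx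
          exact ((hderiv x ⟨le_trans hua hx.1.le, le_trans hx.2.le hpb⟩).differentiableAt
            ).differentiableWithinAt
        · intro x hx
          rw [interior_Icc] at hx
          have hxm : x ∈ Set.Icc a b := ⟨le_trans hua hx.1.le, le_trans hx.2.le hpb⟩
          rw [(hderiv x hxm).deriv]
          have hx0 : 0 < x := lt_of_lt_of_le ha hxm.1
          have hx1 : x < 1 := lt_of_le_of_lt hxm.2 hb
          apply div_nonpos_of_nonpos_of_nonneg
          · nlinarith [hM x hxm, hx.2]
          · have h1x : 0 < 1 - x := by linarith
            positivity
      have := hanti (Set.left_mem_Icc.2 hle) (Set.right_mem_Icc.2 hle) hle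
      rw [hF0] at this; exact this
  have hlog1 : Real.log (p / u) = Real.log p - Real.log u :=
    Real.log_div (ne_of_gt hp0) (ne_of_gt hu0)
  have hlog2 : Real.log ((1 - p) / (1 - u)) = Real.log (1 - p) - Real.log (1 - u) :=
    Real.log_div (by linarith) (by linarith)
  rw [hlog1, hlog2]
  have : (u - p) ^ 2 = (u - p) ^ 2 := rfl
  simp only [hF] at key
  nlinarith [key]

/-- For every `θ ∈ (0,1)` and `ε > 0` there is `η ∈ (0,1)` such that for all
`θ̂, u ∈ [θ − η, θ + η] ∩ [0,1]`, `kl(θ̂, u) ≥ (u − θ̂)² / (2θ(1 − θ)(1 + ε))`. -/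
theorem stmt4 (θ : ℝ) (hθ : θ ∈ Set.Ioo (0:ℝ) 1) (ε : ℝ) (hε : 0 < ε) :
    ∃ η ∈ Set.Ioo (0:ℝ) 1, ∀ θh u : ℝ,
      θh ∈ Set.Icc (θ - η) (θ + η) ∩ Set.Icc 0 1 →
      u ∈ Set.Icc (θ - η) (θ + η) ∩ Set.Icc 0 1 →
      ENNReal.ofReal ((u - θh) ^ 2 / (2 * θ * (1 - θ) * (1 + ε))) ≤ klBer θh u := by
  obtain ⟨hθ0, hθ1⟩ := hθ
  set η : ℝ := min (min θ (1 - θ)) (ε * θ * (1 - θ)) / 2 with hη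
  have hηθ : η ≤ θ / 2 := by
    have : min (min θ (1 - θ)) (ε * θ * (1 - θ)) ≤ θ := le_trans (min_le_left _ _) (min_le_left _ _)
    linarith
  have hηθ1 : η ≤ (1 - θ) / 2 := by
    have : min (min θ (1 - θ)) (ε * θ * (1 - θ)) ≤ 1 - θ :=
      le_trans (min_le_left _ _) (min_le_right _ _)
    linarith
  have hηε : η ≤ ε * θ * (1 - θ) / 2 := by
    have : min (min θ (1 - θ)) (ε * θ * (1 - θ)) ≤ ε * θ * (1 - θ) := min_le_right _ _
    linarith
  have hη0 : 0 < η := by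
    have h1 : 0 < min θ (1 - θ) := lt_min hθ0 (by linarith)
    have h2 : 0 < ε * θ * (1 - θ) := by
      have h1θ : 0 < 1 - θ := by linarith
      positivity
    have : 0 < min (min θ (1 - θ)) (ε * θ * (1 - θ)) := lt_min h1 h2
    rw [hη]; linarith
  refine ⟨η, ⟨hη0, by linarith⟩, ?_⟩
  intro θh u hθh hu
  obtain ⟨⟨hθh1, hθh2⟩, -⟩ := hθh
  obtain ⟨⟨hu1, hu2⟩, -⟩ := hu
  have ha : 0 < θ - η := by linarith
  have hb : θ + η < 1 := by linarith
  set M : ℝ := θ * (1 - θ) * (1 + ε) with hM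
  have hM0 : 0 < M := by
    have h1θ : 0 < 1 - θ := by linarith
    rw [hM]; positivity
  have hMb : ∀ t ∈ Set.Icc (θ - η) (θ + η), t * (1 - t) ≤ M := by
    intro t ht
    obtain ⟨ht1, ht2⟩ := ht
    nlinarith
  have hkey := kl_quad_lower θh u (θ - η) (θ + η) M ha hb ⟨hθh1, hθh2⟩ ⟨hu1, hu2⟩ hM0 hMb
  have hu0 : (0:ℝ) < u := by linarith
  have hu1' : u < 1 := by linarith
  rw [klBer, if_neg]
  · apply ENNReal.ofReal_le_ofReal
    have : 2 * θ * (1 - θ) * (1 + ε) = 2 * M := by rw [hM]; ring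
    rw [this]
    exact hkey
  · push_neg
    constructor
    · intro h; exact absurd h (ne_of_gt hu0)
    · intro h; exact absurd h (ne_of_lt hu1')
end

section
/- In the second-price auction model, the expected cumulative regret of any bidding strategy satisfies R_T ≤ Σ_{t=1}^T E[(M_t − v)·1{v ≤ M_t ≤ B_t}] + Σ_{t=1}^T P(B_t < v). -/
open MeasureTheory ProbabilityTheory Set

section Helpers
variable {Ω : Type*} [MeasurableSpace Ω] {μ : Measure Ω} [IsProbabilityMeasure μ]

/-- bounded measurable functions are integrable -/
lemma aux_intble {f : Ω → ℝ} (hf : Measurable f) (C : ℝ) (h : ∀ ω, |f ω| ≤ C) :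
    Integrable f μ :=
  (integrable_const C).mono' hf.aestronglyMeasurable (Filter.Eventually.of_forall h)


variable {Ω : Type*} [MeasurableSpace Ω] {μ : Measure Ω} [IsProbabilityMeasure μ]

lemma aux_keyA {V M : Ω → ℝ} {v : ℝ} (hV : Measurable V) (hM : Measurable M)
    (hVmean : ∫ ω, V ω ∂μ = v) (hVM : IndepFun V M μ) (c : ℝ) :
    ∫ ω, V ω * (if M ω ≤ c then (1:ℝ) else 0) ∂μ
      = v * ∫ ω, (if M ω ≤ c then (1:ℝ) else 0) ∂μ := by
  have hf : Measurable (fun m : ℝ => if m ≤ c then (1:ℝ) else 0) :=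
    Measurable.ite (measurableSet_le measurable_id measurable_const) measurable_const
      measurable_const
  have hind : IndepFun V (fun ω => if M ω ≤ c then (1:ℝ) else 0) μ :=
    hVM.comp measurable_id hf
  have := hind.integral_fun_mul_eq_mul_integral hV.aestronglyMeasurable ((hf.comp hM).aestronglyMeasurable)
  rw [this, hVmean]

/-- Identity B: for the (independent) random bid. -/
lemma aux_keyB {V M B : Ω → ℝ} {v : ℝ} (hV : Measurable V) (hM : Measurable M)
    (hB : Measurable B) (hVb : ∀ ω, V ω ∈ Icc (0:ℝ) 1)
    (hVmean : ∫ ω, V ω ∂μ = v) (hVM : IndepFun V M μ)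
    (hind : IndepFun B (fun ω => (V ω, M ω)) μ) :
    ∫ ω, V ω * (if M ω ≤ B ω then (1:ℝ) else 0) ∂μ
      = v * ∫ ω, (if M ω ≤ B ω then (1:ℝ) else 0) ∂μ := by
  set Y : Ω → ℝ × ℝ := fun ω => (V ω, M ω) with hY
  have hYmeas : Measurable Y := hV.prodMk hM
  set ν₁ : Measure ℝ := μ.map B with hν₁
  set ν₂ : Measure (ℝ × ℝ) := μ.map Y with hν₂
  haveI : IsProbabilityMeasure ν₁ := Measure.isProbabilityMeasure_map hB.aemeasurable
  haveI : IsProbabilityMeasure ν₂ := Measure.isProbabilityMeasure_map hYmeas.aemeasurable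
  have hprod : μ.map (fun ω => (B ω, Y ω)) = ν₁.prod ν₂ :=
    (indepFun_iff_map_prod_eq_prod_map_map hB.aemeasurable hYmeas.aemeasurable).mp hind
  set g : ℝ × ℝ × ℝ → ℝ := fun q => q.2.1 * (if q.2.2 ≤ q.1 then 1 else 0) with hg
  set g₀ : ℝ × ℝ × ℝ → ℝ := fun q => (if q.2.2 ≤ q.1 then (1:ℝ) else 0) with hg0
  have hg0meas : Measurable g₀ :=
    Measurable.ite (measurableSet_le (measurable_snd.snd) measurable_fst)
      measurable_const measurable_const
  have hgmeas : Measurable g := (measurable_snd.fst).mul hg0meas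
  have hpair : Measurable (fun ω => (B ω, Y ω)) := hB.prodMk hYmeas
  -- integrability on the product measure
  have hgint : Integrable g (ν₁.prod ν₂) := by
    rw [← hprod, integrable_map_measure hgmeas.aestronglyMeasurable hpair.aemeasurable]
    refine (integrable_const (1:ℝ)).mono'
      ((hgmeas.comp hpair).aestronglyMeasurable) (Filter.Eventually.of_forall fun ω => ?_)
    simp only [Function.comp_apply, hg]
    have h1 := (hVb ω).1; have h2 := (hVb ω).2
    by_cases h : M ω ≤ B ω <;> simp [h, abs_le, hY] <;> constructor <;> linarith
  have hg0int : Integrable g₀ (ν₁.prod ν₂) := by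
    rw [← hprod, integrable_map_measure hg0meas.aestronglyMeasurable hpair.aemeasurable]
    refine (integrable_const (1:ℝ)).mono'
      ((hg0meas.comp hpair).aestronglyMeasurable) (Filter.Eventually.of_forall fun ω => ?_)
    simp only [Function.comp_apply, hg0]
    by_cases h : M ω ≤ B ω <;> simp [h, hY]
  have lhs_eq : ∫ ω, V ω * (if M ω ≤ B ω then (1:ℝ) else 0) ∂μ = ∫ q, g q ∂(ν₁.prod ν₂) := by
    rw [← hprod, integral_map hpair.aemeasurable hgmeas.aestronglyMeasurable]
  have rhs_eq : ∫ ω, (if M ω ≤ B ω then (1:ℝ) else 0) ∂μ = ∫ q, g₀ q ∂(ν₁.prod ν₂) := by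
    rw [← hprod, integral_map hpair.aemeasurable hg0meas.aestronglyMeasurable]
  rw [lhs_eq, rhs_eq, integral_prod _ hgint, integral_prod _ hg0int]
  have inner : ∀ b : ℝ, ∫ p, g (b, p) ∂ν₂ = v * ∫ p, g₀ (b, p) ∂ν₂ := by
    intro b
    have e1 : ∫ p, g (b, p) ∂ν₂ = ∫ ω, V ω * (if M ω ≤ b then (1:ℝ) else 0) ∂μ := by
      rw [hν₂]
      exact integral_map hYmeas.aemeasurable
        ((hgmeas.comp (measurable_const.prodMk measurable_id)).aestronglyMeasurable)
    have e2 : ∫ p, g₀ (b, p) ∂ν₂ = ∫ ω, (if M ω ≤ b then (1:ℝ) else 0) ∂μ := by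
      rw [hν₂]
      exact integral_map hYmeas.aemeasurable
        ((hg0meas.comp (measurable_const.prodMk measurable_id)).aestronglyMeasurable)
    rw [e1, e2, aux_keyA hV hM hVmean hVM b]
  calc ∫ b, ∫ p, g (b, p) ∂ν₂ ∂ν₁ = ∫ b, v * ∫ p, g₀ (b, p) ∂ν₂ ∂ν₁ := by
        exact integral_congr_ae (Filter.Eventually.of_forall inner)
    _ = v * ∫ b, ∫ p, g₀ (b, p) ∂ν₂ ∂ν₁ := integral_const_mul v _


omit [IsProbabilityMeasure μ] in
lemma aux_subeq {V M χ : Ω → ℝ} {v : ℝ}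
    (iV : Integrable (fun ω => V ω * χ ω) μ) (iM : Integrable (fun ω => M ω * χ ω) μ)
    (iχ : Integrable χ μ)
    (hkey : ∫ ω, V ω * χ ω ∂μ = v * ∫ ω, χ ω ∂μ) :
    ∫ ω, (V ω - M ω) * χ ω ∂μ = ∫ ω, (v - M ω) * χ ω ∂μ := by
  have l1 : ∫ ω, (V ω - M ω) * χ ω ∂μ = ∫ ω, (V ω * χ ω - M ω * χ ω) ∂μ := by
    congr 1; funext ω; ring
  have l2 : ∫ ω, (v - M ω) * χ ω ∂μ = ∫ ω, (v * χ ω - M ω * χ ω) ∂μ := by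
    congr 1; funext ω; ring
  rw [l1, l2, integral_sub iV iM, integral_sub (iχ.const_mul v) iM, hkey, integral_const_mul]

end Helpers

lemma aux_pt (v m bb c : ℝ) (hm : 0 ≤ m) (hv : v ≤ 1) :
    (v - m) * (if m ≤ c then (1:ℝ) else 0) - (v - m) * (if m ≤ bb then (1:ℝ) else 0)
      ≤ (m - v) * (if v ≤ m ∧ m ≤ bb then (1:ℝ) else 0) + (if bb < v then (1:ℝ) else 0) := by
  by_cases h1 : m ≤ c <;> by_cases h2 : m ≤ bb <;> by_cases h3 : v ≤ m <;>
    by_cases h4 : bb < v <;> simp [h1, h2, h3, h4] <;> linarith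

/-- In the second-price auction model, the expected cumulative regret of any bidding
strategy satisfies
`R_T ≤ Σ_{t=1}^T E[(M_t − v)·1{v ≤ M_t ≤ B_t}] + Σ_{t=1}^T P(B_t < v)`. -/
theorem stmt7
    {Ω : Type*} [MeasurableSpace Ω] (μ : Measure Ω) [IsProbabilityMeasure μ]
    (V M B : ℕ → Ω → ℝ) (v : ℝ) (T : ℕ)
    (hVmeas : ∀ t, Measurable (V t)) (hMmeas : ∀ t, Measurable (M t))
    (hBmeas : ∀ t, Measurable (B t))
    (hVrange : ∀ t ω, V t ω ∈ Icc (0:ℝ) 1)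
    (hMrange : ∀ t ω, M t ω ∈ Icc (0:ℝ) 1)
    (hBrange : ∀ t ω, B t ω ∈ Icc (0:ℝ) 1)
    (hVmean : ∀ t, ∫ ω, V t ω ∂μ = v)
    (hiid : ∀ s t, Measure.map (fun ω => (V s ω, M s ω)) μ
        = Measure.map (fun ω => (V t ω, M t ω)) μ)
    (hpairindep : iIndepFun (fun t ω => (V t ω, M t ω)) μ)
    (hVM : ∀ t, IndepFun (V t) (M t) μ)
    -- the bid B_t depends only on past observations, hence is independent of (V_t, M_t)
    (hadapted : ∀ t, IndepFun (B t) (fun ω => (V t ω, M t ω)) μ) :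
    sSup ((fun b => ∑ t ∈ Finset.Icc 1 T,
        ∫ ω, (V t ω - M t ω) * (if M t ω ≤ b then (1:ℝ) else 0) ∂μ) '' Icc (0:ℝ) 1)
      - ∑ t ∈ Finset.Icc 1 T,
          ∫ ω, (V t ω - M t ω) * (if M t ω ≤ B t ω then (1:ℝ) else 0) ∂μ
    ≤ (∑ t ∈ Finset.Icc 1 T,
        ∫ ω, (M t ω - v) * (if v ≤ M t ω ∧ M t ω ≤ B t ω then (1:ℝ) else 0) ∂μ)
      + ∑ t ∈ Finset.Icc 1 T, (μ {ω | B t ω < v}).toReal := by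
  have hv0 : 0 ≤ v := by
    rw [← hVmean 0]; exact integral_nonneg fun ω => (hVrange 0 ω).1
  have hv1 : v ≤ 1 := by
    rw [← hVmean 0]
    calc ∫ ω, V 0 ω ∂μ ≤ ∫ _ω, (1:ℝ) ∂μ := by
          refine integral_mono (aux_intble (hVmeas 0) 1 fun ω => ?_)
            (integrable_const 1) (fun ω => (hVrange 0 ω).2)
          exact abs_le.mpr ⟨by linarith [(hVrange 0 ω).1], (hVrange 0 ω).2⟩
      _ = 1 := by simp
  -- per-round key inequality
  have key : ∀ t, ∀ b : ℝ,
      ∫ ω, (V t ω - M t ω) * (if M t ω ≤ b then (1:ℝ) else 0) ∂μ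
        ≤ (∫ ω, (M t ω - v) * (if v ≤ M t ω ∧ M t ω ≤ B t ω then (1:ℝ) else 0) ∂μ)
          + (μ {ω | B t ω < v}).toReal
          + ∫ ω, (V t ω - M t ω) * (if M t ω ≤ B t ω then (1:ℝ) else 0) ∂μ := by
    intro t b
    have hMt := hMmeas t; have hVt := hVmeas t; have hBt := hBmeas t
    have m1 : MeasurableSet {ω | M t ω ≤ b} := measurableSet_le hMt measurable_const
    have m2 : MeasurableSet {ω | M t ω ≤ B t ω} := measurableSet_le hMt hBt
    have m3 : MeasurableSet {ω | v ≤ M t ω ∧ M t ω ≤ B t ω} := by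
      rw [Set.setOf_and]; exact (measurableSet_le measurable_const hMt).inter m2
    have χ1m : Measurable (fun ω => if M t ω ≤ b then (1:ℝ) else 0) :=
      Measurable.ite m1 measurable_const measurable_const
    have χ2m : Measurable (fun ω => if M t ω ≤ B t ω then (1:ℝ) else 0) :=
      Measurable.ite m2 measurable_const measurable_const
    have χ3m : Measurable (fun ω => if v ≤ M t ω ∧ M t ω ≤ B t ω then (1:ℝ) else 0) :=
      Measurable.ite m3 measurable_const measurable_const
    have abs1 : ∀ (x : ℝ), 0 ≤ x → x ≤ 1 → ∀ y : ℝ, y = 1 ∨ y = 0 → |x * y| ≤ 1 := by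
      rintro x hx0 hx1 y (rfl | rfl) <;> simp <;> rw [abs_le] <;> constructor <;> linarith
    -- integrability facts
    have iχ1 : Integrable (fun ω => if M t ω ≤ b then (1:ℝ) else 0) μ :=
      aux_intble χ1m 1 fun ω => by by_cases h : M t ω ≤ b <;> simp [h]
    have iχ2 : Integrable (fun ω => if M t ω ≤ B t ω then (1:ℝ) else 0) μ :=
      aux_intble χ2m 1 fun ω => by by_cases h : M t ω ≤ B t ω <;> simp [h]
    have bnd : ∀ (f χ : Ω → ℝ), (∀ ω, |f ω| ≤ 2) → (∀ ω, χ ω = 0 ∨ χ ω = 1) → ∀ ω,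
        |f ω * χ ω| ≤ 2 := by
      rintro f χ hf h01 ω
      rcases h01 ω with h | h
      · simp [h]
      · simpa [h] using hf ω
    have hVabs : ∀ ω, |V t ω - M t ω| ≤ 2 := fun ω => abs_le.mpr
      ⟨by linarith [(hVrange t ω).1, (hMrange t ω).2], by linarith [(hVrange t ω).2, (hMrange t ω).1]⟩
    have hvMabs : ∀ ω, |v - M t ω| ≤ 2 := fun ω => abs_le.mpr
      ⟨by linarith [(hMrange t ω).2], by linarith [(hMrange t ω).1]⟩
    have hMvabs : ∀ ω, |M t ω - v| ≤ 2 := fun ω => abs_le.mpr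
      ⟨by linarith [(hMrange t ω).1], by linarith [(hMrange t ω).2]⟩
    have hVVabs : ∀ ω, |V t ω| ≤ 2 := fun ω => abs_le.mpr
      ⟨by linarith [(hVrange t ω).1], by linarith [(hVrange t ω).2]⟩
    have hMMabs : ∀ ω, |M t ω| ≤ 2 := fun ω => abs_le.mpr
      ⟨by linarith [(hMrange t ω).1], by linarith [(hMrange t ω).2]⟩
    have iV1 : Integrable (fun ω => V t ω * (if M t ω ≤ b then (1:ℝ) else 0)) μ :=
      aux_intble (hVt.mul χ1m) 2 (bnd _ _ hVVabs (fun ω => by by_cases h : M t ω ≤ b <;> simp [h]))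
    have iM1 : Integrable (fun ω => M t ω * (if M t ω ≤ b then (1:ℝ) else 0)) μ :=
      aux_intble (hMt.mul χ1m) 2 (bnd _ _ hMMabs (fun ω => by by_cases h : M t ω ≤ b <;> simp [h]))
    have iV2 : Integrable (fun ω => V t ω * (if M t ω ≤ B t ω then (1:ℝ) else 0)) μ :=
      aux_intble (hVt.mul χ2m) 2 (bnd _ _ hVVabs (fun ω => by by_cases h : M t ω ≤ B t ω <;> simp [h]))
    have iM2 : Integrable (fun ω => M t ω * (if M t ω ≤ B t ω then (1:ℝ) else 0)) μ :=
      aux_intble (hMt.mul χ2m) 2 (bnd _ _ hMMabs (fun ω => by by_cases h : M t ω ≤ B t ω <;> simp [h]))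
    have ivM1 : Integrable (fun ω => (v - M t ω) * (if M t ω ≤ b then (1:ℝ) else 0)) μ :=
      aux_intble ((measurable_const.sub hMt).mul χ1m) 2 (bnd _ _ hvMabs (fun ω => by by_cases h : M t ω ≤ b <;> simp [h]))
    have ivM2 : Integrable (fun ω => (v - M t ω) * (if M t ω ≤ B t ω then (1:ℝ) else 0)) μ :=
      aux_intble ((measurable_const.sub hMt).mul χ2m) 2 (bnd _ _ hvMabs (fun ω => by by_cases h : M t ω ≤ B t ω <;> simp [h]))
    have iMv3 : Integrable
        (fun ω => (M t ω - v) * (if v ≤ M t ω ∧ M t ω ≤ B t ω then (1:ℝ) else 0)) μ :=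
      aux_intble ((hMt.sub measurable_const).mul χ3m) 2 (bnd _ _ hMvabs (fun ω => by by_cases h : v ≤ M t ω ∧ M t ω ≤ B t ω <;> simp [h]))
    have iχ4 : Integrable (fun ω => if B t ω < v then (1:ℝ) else 0) μ :=
      aux_intble (Measurable.ite (measurableSet_lt hBt measurable_const)
        measurable_const measurable_const) 1 fun ω => by by_cases h : B t ω < v <;> simp [h]
    -- equalities replacing V by v
    have e1 : ∫ ω, (V t ω - M t ω) * (if M t ω ≤ b then (1:ℝ) else 0) ∂μ
        = ∫ ω, (v - M t ω) * (if M t ω ≤ b then (1:ℝ) else 0) ∂μ :=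
      aux_subeq iV1 iM1 iχ1 (aux_keyA hVt hMt (hVmean t) (hVM t) b)
    have e2 : ∫ ω, (V t ω - M t ω) * (if M t ω ≤ B t ω then (1:ℝ) else 0) ∂μ
        = ∫ ω, (v - M t ω) * (if M t ω ≤ B t ω then (1:ℝ) else 0) ∂μ :=
      aux_subeq iV2 iM2 iχ2
        (aux_keyB hVt hMt hBt (hVrange t) (hVmean t) (hVM t) (hadapted t))
    -- indicator integral = measure
    have ind : ∫ ω, (if B t ω < v then (1:ℝ) else 0) ∂μ = (μ {ω | B t ω < v}).toReal := by
      have hset : MeasurableSet {ω | B t ω < v} := measurableSet_lt hBt measurable_const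
      have heq : (fun ω => if B t ω < v then (1:ℝ) else 0)
          = Set.indicator {ω | B t ω < v} (fun _ => 1) := by
        funext ω; by_cases h : B t ω < v <;> simp [Set.indicator_apply, h, Set.mem_setOf_eq]
      rw [heq, integral_indicator hset]; simp [Measure.real]
    -- pointwise estimate and integration
    have step : ∫ ω, (v - M t ω) * (if M t ω ≤ b then (1:ℝ) else 0) ∂μ
        - ∫ ω, (v - M t ω) * (if M t ω ≤ B t ω then (1:ℝ) else 0) ∂μ
        ≤ (∫ ω, (M t ω - v) * (if v ≤ M t ω ∧ M t ω ≤ B t ω then (1:ℝ) else 0) ∂μ)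
          + (μ {ω | B t ω < v}).toReal := by
      rw [← integral_sub ivM1 ivM2]
      have mono := integral_mono (ivM1.sub ivM2) (iMv3.add iχ4)
        (fun ω => aux_pt v (M t ω) (B t ω) b (hMrange t ω).1 hv1)
      simp only [Pi.sub_apply, Pi.add_apply] at mono
      rwa [integral_add iMv3 iχ4, ind] at mono
    linarith [e1, e2, step]
  -- assemble
  rw [sub_le_iff_le_add]
  refine csSup_le (((nonempty_Icc (a := (0:ℝ)) (b := 1)).mpr (by norm_num)).image _) ?_
  rintro y ⟨b, hb, rfl⟩
  calc (∑ t ∈ Finset.Icc 1 T, ∫ ω, (V t ω - M t ω) * (if M t ω ≤ b then (1:ℝ) else 0) ∂μ)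
      ≤ ∑ t ∈ Finset.Icc 1 T,
          ((∫ ω, (M t ω - v) * (if v ≤ M t ω ∧ M t ω ≤ B t ω then (1:ℝ) else 0) ∂μ)
            + (μ {ω | B t ω < v}).toReal
            + ∫ ω, (V t ω - M t ω) * (if M t ω ≤ B t ω then (1:ℝ) else 0) ∂μ) :=
        Finset.sum_le_sum fun t _ => key t b
    _ = _ := by rw [Finset.sum_add_distrib, Finset.sum_add_distrib]
end

section
/- Suppose F satisfies the margin condition with parameter α > 0 and constant β > 0 on [v, v+Δ] and F(v) > 0. Then the expected cumulative regret of any bidding strategy satisfies R_T ≤ Σ_{t=1}^T E[(β (B_t − v)_+^{α+1} / F(v)) · 1{M_t ≤ B_t}] + Σ_{t=1}^T P(B_t < v), where the margin condition holds on [v, 1] (i.e. Δ = 1 − v). -/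
open MeasureTheory ProbabilityTheory Set

set_option maxHeartbeats 1000000

open MeasureTheory ProbabilityTheory Set

section Aux

variable {Ω : Type*} [MeasurableSpace Ω] {μ : Measure Ω} [IsProbabilityMeasure μ]

lemma sp_integrable_of_bdd {f : Ω → ℝ} (hf : AEStronglyMeasurable f μ) {C : ℝ}
    (h : ∀ ω, |f ω| ≤ C) : Integrable f μ :=
  Integrable.mono' (integrable_const C) hf (Filter.Eventually.of_forall h)

lemma sp_ite_meas {M : Ω → ℝ} (hM : Measurable M) (c : ℝ) :
    Measurable (fun ω => if M ω ≤ c then (1:ℝ) else 0) :=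
  Measurable.ite (measurableSet_le hM measurable_const) measurable_const measurable_const

lemma sp_integral_ite_le {M : Ω → ℝ} (hM : Measurable M) (c : ℝ) :
    ∫ ω, (if M ω ≤ c then (1:ℝ) else 0) ∂μ = (μ {ω | M ω ≤ c}).toReal := by
  rw [← measureReal_def, ← integral_indicator_one (measurableSet_le hM measurable_const)]
  refine integral_congr_ae (Filter.Eventually.of_forall fun ω => ?_)
  by_cases h : M ω ≤ c <;> simp [Set.indicator_apply, Set.mem_setOf_eq, h]

lemma sp_integral_ite_lt {M : Ω → ℝ} (hM : Measurable M) (c : ℝ) :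
    ∫ ω, (if M ω < c then (1:ℝ) else 0) ∂μ = (μ {ω | M ω < c}).toReal := by
  rw [← measureReal_def, ← integral_indicator_one (measurableSet_lt hM measurable_const)]
  refine integral_congr_ae (Filter.Eventually.of_forall fun ω => ?_)
  by_cases h : M ω < c <;> simp [Set.indicator_apply, Set.mem_setOf_eq, h]

/-- replace `V` by its mean in integrals against a function of `M`. -/
lemma sp_replace_mean {V M : Ω → ℝ} {v : ℝ} (hV : Measurable V) (hM : Measurable M)
    (hVr : ∀ ω, V ω ∈ Icc (0:ℝ) 1) (hMr : ∀ ω, M ω ∈ Icc (0:ℝ) 1)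
    (hmean : ∫ ω, V ω ∂μ = v) (hVM : IndepFun V M μ) (c : ℝ) :
    ∫ ω, (V ω - M ω) * (if M ω ≤ c then (1:ℝ) else 0) ∂μ
      = ∫ ω, (v - M ω) * (if M ω ≤ c then (1:ℝ) else 0) ∂μ := by
  set I : Ω → ℝ := fun ω => if M ω ≤ c then (1:ℝ) else 0 with hI
  have hImeas : Measurable I := sp_ite_meas hM c
  have hIbd : ∀ ω, |I ω| ≤ 1 := by
    intro ω; simp only [hI]; split <;> simp
  have hVbd : ∀ ω, |V ω| ≤ 1 := fun ω =>
    abs_le.mpr ⟨by linarith [(hVr ω).1], (hVr ω).2⟩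
  have hMbd : ∀ ω, |M ω| ≤ 1 := fun ω =>
    abs_le.mpr ⟨by linarith [(hMr ω).1], (hMr ω).2⟩
  have intI : Integrable I μ := sp_integrable_of_bdd hImeas.aestronglyMeasurable hIbd
  have intV : Integrable V μ := sp_integrable_of_bdd hV.aestronglyMeasurable hVbd
  have intVI : Integrable (fun ω => V ω * I ω) μ := by
    refine sp_integrable_of_bdd (hV.mul hImeas).aestronglyMeasurable (C := 1) fun ω => ?_
    rw [abs_mul]
    calc |V ω| * |I ω| ≤ 1 * 1 := by
          exact mul_le_mul (hVbd ω) (hIbd ω) (abs_nonneg _) zero_le_one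
      _ = 1 := by ring
  have intMI : Integrable (fun ω => M ω * I ω) μ := by
    refine sp_integrable_of_bdd (hM.mul hImeas).aestronglyMeasurable (C := 1) fun ω => ?_
    rw [abs_mul]
    calc |M ω| * |I ω| ≤ 1 * 1 := by
          exact mul_le_mul (hMbd ω) (hIbd ω) (abs_nonneg _) zero_le_one
      _ = 1 := by ring
  have hψ : Measurable (fun x : ℝ => if x ≤ c then (1:ℝ) else 0) :=
    Measurable.ite measurableSet_Iic measurable_const measurable_const
  have hindep : IndepFun V I μ := hVM.comp measurable_id hψ
  have hVI : ∫ ω, V ω * I ω ∂μ = v * ∫ ω, I ω ∂μ := by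
    have := hindep.integral_mul_eq_mul_integral intV.aestronglyMeasurable intI.aestronglyMeasurable
    simpa [Pi.mul_apply, hmean] using this
  have e1 : ∫ ω, (V ω - M ω) * I ω ∂μ
      = (∫ ω, V ω * I ω ∂μ) - ∫ ω, M ω * I ω ∂μ := by
    rw [← integral_sub intVI intMI]
    congr 1; ext ω; ring
  have e2 : ∫ ω, (v - M ω) * I ω ∂μ
      = v * (∫ ω, I ω ∂μ) - ∫ ω, M ω * I ω ∂μ := by
    have : ∫ ω, (v - M ω) * I ω ∂μ = ∫ ω, (v * I ω - M ω * I ω) ∂μ :=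
      integral_congr_ae (Filter.Eventually.of_forall fun ω => by ring)
    rw [this, integral_sub (intI.const_mul v) intMI, integral_const_mul]
  rw [e1, e2, hVI]

end Aux

section Key

variable {Ω : Type*} [MeasurableSpace Ω] {μ : Measure Ω} [IsProbabilityMeasure μ]

lemma sp_key {V M B : Ω → ℝ} {v : ℝ} {F : ℝ → ℝ} {α β : ℝ}
    (hα : 0 < α) (hβ : 0 < β)
    (hV : Measurable V) (hM : Measurable M) (hB : Measurable B)
    (hVr : ∀ ω, V ω ∈ Icc (0:ℝ) 1) (hMr : ∀ ω, M ω ∈ Icc (0:ℝ) 1)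
    (hBr : ∀ ω, B ω ∈ Icc (0:ℝ) 1)
    (hmean : ∫ ω, V ω ∂μ = v) (hv0 : 0 ≤ v) (hv1 : v ≤ 1)
    (hVM : IndepFun V M μ)
    (had : IndepFun B (fun ω => (V ω, M ω)) μ)
    (hF : ∀ x, (μ {ω | M ω ≤ x}).toReal = F x)
    (hmargin : ∀ x ∈ Icc v 1, F x - F v ≤ β * (x - v) ^ α)
    (hFv : 0 < F v) :
    ∫ ω, (v - M ω) * (if M ω ≤ v then (1:ℝ) else 0) ∂μ
      ≤ (∫ ω, (V ω - M ω) * (if M ω ≤ B ω then (1:ℝ) else 0) ∂μ)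
        + (∫ ω, (β * (max (B ω - v) 0) ^ (α + 1) / F v)
            * (if M ω ≤ B ω then (1:ℝ) else 0) ∂μ)
        + (μ {ω | B ω < v}).toReal := by
  have hP : Measurable (fun ω => (V ω, M ω)) := hV.prodMk hM
  set P : Ω → ℝ × ℝ := fun ω => (V ω, M ω) with hPdef
  set c : ℝ → ℝ := fun b => β * (max (b - v) 0) ^ (α + 1) / F v with hcdef
  have hrpow : Measurable (fun x : ℝ => x ^ (α + 1)) :=
    (Real.continuous_rpow_const (by linarith)).measurable
  have hc_meas : Measurable c :=
    ((hrpow.comp ((measurable_id.sub_const v).max measurable_const)).const_mul β).div_const (F v)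
  have hc_nonneg : ∀ b, 0 ≤ c b := by
    intro b
    have h1 : (0:ℝ) ≤ max (b - v) 0 := le_max_right _ _
    have h2 : (0:ℝ) ≤ (max (b - v) 0) ^ (α + 1) := Real.rpow_nonneg h1 _
    positivity
  have hbF : (0:ℝ) ≤ β / F v := div_nonneg hβ.le hFv.le
  have hc_le : ∀ b ∈ Icc (0:ℝ) 1, c b ≤ β / F v := by
    intro b hb
    have h1 : max (b - v) 0 ≤ 1 := max_le (by linarith [hb.2]) zero_le_one
    have h2 : (max (b - v) 0) ^ (α + 1) ≤ 1 :=
      Real.rpow_le_one (le_max_right _ _) h1 (by linarith)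
    have h3 : β * (max (b - v) 0) ^ (α + 1) ≤ β := by nlinarith
    calc c b = (β * (max (b - v) 0) ^ (α + 1)) / F v := rfl
      _ ≤ β / F v := (div_le_div_iff_of_pos_right hFv).mpr h3
  -- the combined function on ℝ × (ℝ × ℝ)
  set h : ℝ × (ℝ × ℝ) → ℝ := fun q =>
    (q.2.1 - q.2.2 + c q.1) * (if q.2.2 ≤ q.1 then (1:ℝ) else 0)
      + (if q.1 < v then (1:ℝ) else 0) with hhdef
  have hh : Measurable h := by
    apply Measurable.add
    · exact ((measurable_snd.fst.sub measurable_snd.snd).add (hc_meas.comp measurable_fst)).mul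
        (Measurable.ite (measurableSet_le measurable_snd.snd measurable_fst)
          measurable_const measurable_const)
    · exact Measurable.ite (measurableSet_lt measurable_fst measurable_const)
        measurable_const measurable_const
  have hbd : ∀ b ∈ Icc (0:ℝ) 1, ∀ x ∈ Icc (0:ℝ) 1, ∀ m ∈ Icc (0:ℝ) 1,
      |h (b, (x, m))| ≤ 2 + β / F v := by
    intro b hb x hx m hm
    have h0 := hc_nonneg b
    have h1 := hc_le b hb
    simp only [hhdef]
    split_ifs <;> rw [abs_le] <;>
      refine ⟨by nlinarith [hx.1, hx.2, hm.1, hm.2], by nlinarith [hx.1, hx.2, hm.1, hm.2]⟩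
  have hintμ : Integrable (fun ω => h (B ω, P ω)) μ := by
    refine sp_integrable_of_bdd ((hh.comp (hB.prodMk hP)).aestronglyMeasurable)
      (C := 2 + β / F v) fun ω => ?_
    exact hbd _ (hBr ω) _ (hVr ω) _ (hMr ω)
  -- integrability of the pieces
  have hiteMB : Measurable (fun ω => if M ω ≤ B ω then (1:ℝ) else 0) :=
    Measurable.ite (measurableSet_le hM hB) measurable_const measurable_const
  have int1 : Integrable (fun ω => (V ω - M ω) * (if M ω ≤ B ω then (1:ℝ) else 0)) μ := by
    refine sp_integrable_of_bdd ((hV.sub hM).mul hiteMB).aestronglyMeasurable (C := 1) fun ω => ?_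
    rw [abs_mul]
    have := (hVr ω); have := (hMr ω)
    have h1 : |V ω - M ω| ≤ 1 := abs_le.mpr ⟨by linarith [(hVr ω).1, (hMr ω).2],
      by linarith [(hVr ω).2, (hMr ω).1]⟩
    have h2 : |if M ω ≤ B ω then (1:ℝ) else 0| ≤ 1 := by split <;> simp
    calc |V ω - M ω| * |if M ω ≤ B ω then (1:ℝ) else 0| ≤ 1 * 1 :=
        mul_le_mul h1 h2 (abs_nonneg _) zero_le_one
      _ = 1 := one_mul 1
  have int2 : Integrable (fun ω => c (B ω) * (if M ω ≤ B ω then (1:ℝ) else 0)) μ := by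
    refine sp_integrable_of_bdd ((hc_meas.comp hB).mul hiteMB).aestronglyMeasurable
      (C := β / F v) fun ω => ?_
    rw [abs_mul, abs_of_nonneg (hc_nonneg _)]
    have h2 : |if M ω ≤ B ω then (1:ℝ) else 0| ≤ 1 := by split <;> simp
    calc c (B ω) * |if M ω ≤ B ω then (1:ℝ) else 0| ≤ (β / F v) * 1 :=
        mul_le_mul (hc_le _ (hBr ω)) h2 (abs_nonneg _) hbF
      _ = β / F v := mul_one _
  have int3 : Integrable (fun ω => if B ω < v then (1:ℝ) else 0) μ := by
    refine sp_integrable_of_bdd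
      ((Measurable.ite (measurableSet_lt hB measurable_const) measurable_const
        measurable_const)).aestronglyMeasurable (C := 1) fun ω => ?_
    split <;> simp
  have hsplit : ∫ ω, h (B ω, P ω) ∂μ
      = (∫ ω, (V ω - M ω) * (if M ω ≤ B ω then (1:ℝ) else 0) ∂μ)
        + (∫ ω, c (B ω) * (if M ω ≤ B ω then (1:ℝ) else 0) ∂μ)
        + (μ {ω | B ω < v}).toReal := by
    have he : (fun ω => h (B ω, P ω))
        = fun ω => ((V ω - M ω) * (if M ω ≤ B ω then (1:ℝ) else 0)
            + c (B ω) * (if M ω ≤ B ω then (1:ℝ) else 0))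
          + (if B ω < v then (1:ℝ) else 0) := by
      funext ω; simp only [hhdef, hPdef]; ring
    have int12 : Integrable (fun ω => (V ω - M ω) * (if M ω ≤ B ω then (1:ℝ) else 0)
        + c (B ω) * (if M ω ≤ B ω then (1:ℝ) else 0)) μ := int1.add int2
    rw [he, integral_add int12 int3, integral_add int1 int2, sp_integral_ite_lt hB v]
  -- product structure
  set ν := μ.map B with hνdef
  set ρ := μ.map P with hρdef
  haveI : IsProbabilityMeasure ν := Measure.isProbabilityMeasure_map hB.aemeasurable
  haveI : IsProbabilityMeasure ρ := Measure.isProbabilityMeasure_map hP.aemeasurable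
  have hmapeq : μ.map (fun ω => (B ω, P ω)) = ν.prod ρ :=
    (indepFun_iff_map_prod_eq_prod_map_map hB.aemeasurable hP.aemeasurable).mp had
  have hJmap : ∫ ω, h (B ω, P ω) ∂μ = ∫ q, h q ∂(ν.prod ρ) := by
    rw [← hmapeq, integral_map (hB.prodMk hP).aemeasurable hh.aestronglyMeasurable]
  have hint_prod : Integrable h (ν.prod ρ) := by
    rw [← hmapeq]
    exact (integrable_map_measure hh.aestronglyMeasurable
      (hB.prodMk hP).aemeasurable).mpr hintμ
  have hfub : ∫ q, h q ∂(ν.prod ρ) = ∫ b, (∫ p, h (b, p) ∂ρ) ∂ν :=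
    integral_prod h hint_prod
  -- inner integral computation
  have hFb_def : ∀ b : ℝ, ∫ ω, (if M ω ≤ b then (1:ℝ) else 0) ∂μ = F b := by
    intro b; rw [sp_integral_ite_le hM, hF]
  have intI : ∀ d : ℝ, Integrable (fun ω => if M ω ≤ d then (1:ℝ) else 0) μ := by
    intro d
    refine sp_integrable_of_bdd (sp_ite_meas hM d).aestronglyMeasurable (C := 1) fun ω => ?_
    split <;> simp
  have intvM : ∀ d : ℝ, Integrable (fun ω => (v - M ω) * (if M ω ≤ d then (1:ℝ) else 0)) μ := by
    intro d
    refine sp_integrable_of_bdd ((measurable_const.sub hM).mul (sp_ite_meas hM d)).aestronglyMeasurable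
      (C := 1) fun ω => ?_
    rw [abs_mul]
    have h1 : |v - M ω| ≤ 1 := abs_le.mpr ⟨by linarith [(hMr ω).2], by linarith [(hMr ω).1]⟩
    have h2 : |if M ω ≤ d then (1:ℝ) else 0| ≤ 1 := by split <;> simp
    calc |v - M ω| * |if M ω ≤ d then (1:ℝ) else 0| ≤ 1 * 1 :=
        mul_le_mul h1 h2 (abs_nonneg _) zero_le_one
      _ = 1 := one_mul 1
  have intVM : ∀ d : ℝ, Integrable (fun ω => (V ω - M ω) * (if M ω ≤ d then (1:ℝ) else 0)) μ := by
    intro d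
    refine sp_integrable_of_bdd ((hV.sub hM).mul (sp_ite_meas hM d)).aestronglyMeasurable
      (C := 1) fun ω => ?_
    rw [abs_mul]
    have h1 : |V ω - M ω| ≤ 1 := abs_le.mpr ⟨by linarith [(hVr ω).1, (hMr ω).2],
      by linarith [(hVr ω).2, (hMr ω).1]⟩
    have h2 : |if M ω ≤ d then (1:ℝ) else 0| ≤ 1 := by split <;> simp
    calc |V ω - M ω| * |if M ω ≤ d then (1:ℝ) else 0| ≤ 1 * 1 :=
        mul_le_mul h1 h2 (abs_nonneg _) zero_le_one
      _ = 1 := one_mul 1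
  have hinner : ∀ b : ℝ, ∫ p, h (b, p) ∂ρ
      = (∫ ω, (v - M ω) * (if M ω ≤ b then (1:ℝ) else 0) ∂μ) + c b * F b
        + (if b < v then (1:ℝ) else 0) := by
    intro b
    have hgm : Measurable (fun p : ℝ × ℝ => h (b, p)) := hh.comp measurable_prodMk_left
    have e0 : ∫ p, h (b, p) ∂ρ = ∫ ω, h (b, P ω) ∂μ := by
      rw [hρdef]; exact integral_map hP.aemeasurable hgm.aestronglyMeasurable
    rw [e0]
    have he : (fun ω => h (b, P ω))
        = fun ω => ((V ω - M ω) * (if M ω ≤ b then (1:ℝ) else 0)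
            + c b * (if M ω ≤ b then (1:ℝ) else 0)) + (if b < v then (1:ℝ) else 0) := by
      funext ω; simp only [hhdef, hPdef]; ring
    have intcb : Integrable (fun ω => c b * (if M ω ≤ b then (1:ℝ) else 0)) μ :=
      (intI b).const_mul (c b)
    have int12 : Integrable (fun ω => (V ω - M ω) * (if M ω ≤ b then (1:ℝ) else 0)
        + c b * (if M ω ≤ b then (1:ℝ) else 0)) μ := (intVM b).add intcb
    rw [he, integral_add int12 (integrable_const _),
      integral_add (intVM b) intcb, integral_const_mul, hFb_def,
      integral_const, sp_replace_mean hV hM hVr hMr hmean hVM b]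
    simp [measure_univ]
  -- a.e. range of the bid under ν
  have hae : ∀ᵐ b ∂ν, b ∈ Icc (0:ℝ) 1 := by
    rw [hνdef]
    exact (ae_map_iff hB.aemeasurable measurableSet_Icc).mpr (Filter.Eventually.of_forall hBr)
  set W := ∫ ω, (v - M ω) * (if M ω ≤ v then (1:ℝ) else 0) ∂μ with hWdef
  -- pointwise comparison of the inner integral with the optimal value W
  have hpt : ∀ b ∈ Icc (0:ℝ) 1, W ≤ ∫ p, h (b, p) ∂ρ := by
    intro b hb
    rw [hinner b]
    have hcF : 0 ≤ c b * F b := by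
      refine mul_nonneg (hc_nonneg b) ?_
      rw [← hF b]; exact ENNReal.toReal_nonneg
    set wb := ∫ ω, (v - M ω) * (if M ω ≤ b then (1:ℝ) else 0) ∂μ with hwbdef
    have hdiffeq : W - wb = ∫ ω, ((v - M ω) * (if M ω ≤ v then (1:ℝ) else 0)
        - (v - M ω) * (if M ω ≤ b then (1:ℝ) else 0)) ∂μ :=
      (integral_sub (intvM v) (intvM b)).symm
    by_cases hbv : b < v
    · -- bidding below the value: loss at most 1
      rw [if_pos hbv]
      have hle : ∫ ω, ((v - M ω) * (if M ω ≤ v then (1:ℝ) else 0)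
          - (v - M ω) * (if M ω ≤ b then (1:ℝ) else 0)) ∂μ ≤ ∫ _ω, (1:ℝ) ∂μ := by
        refine integral_mono ((intvM v).sub (intvM b)) (integrable_const 1) fun ω => ?_
        by_cases h1 : M ω ≤ b <;> by_cases h2 : M ω ≤ v <;>
          simp only [h1, h2, if_true, if_false] <;>
          nlinarith [(hMr ω).1, (hMr ω).2]
      rw [integral_const] at hle
      simp only [measure_univ, probReal_univ, ENNReal.toReal_one, smul_eq_mul, one_mul] at hle
      linarith [hdiffeq ▸ hle]
    · -- bidding above the value: margin condition
      push_neg at hbv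
      rw [if_neg (not_lt.mpr hbv)]
      have hle2 : ∫ ω, ((v - M ω) * (if M ω ≤ v then (1:ℝ) else 0)
          - (v - M ω) * (if M ω ≤ b then (1:ℝ) else 0)) ∂μ
          ≤ ∫ ω, (b - v) * ((if M ω ≤ b then (1:ℝ) else 0)
            - (if M ω ≤ v then (1:ℝ) else 0)) ∂μ := by
        refine integral_mono ((intvM v).sub (intvM b))
          (((intI b).sub (intI v)).const_mul (b - v)) fun ω => ?_
        by_cases h1 : M ω ≤ b <;> by_cases h2 : M ω ≤ v
        · simp [h1, h2]
        · simp only [h1, h2, if_true, if_false]; linarith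
        · exact absurd (h2.trans hbv) h1
        · simp [h1, h2]
      have e4 : ∫ ω, (b - v) * ((if M ω ≤ b then (1:ℝ) else 0)
          - (if M ω ≤ v then (1:ℝ) else 0)) ∂μ = (b - v) * (F b - F v) := by
        rw [integral_const_mul, integral_sub (intI b) (intI v), hFb_def, hFb_def]
      have hFvb : F v ≤ F b := by
        rw [← hF v, ← hF b]
        exact ENNReal.toReal_le_toReal (measure_ne_top μ _) (measure_ne_top μ _) |>.mpr
          (measure_mono fun ω hw => le_trans hw hbv)
      have hx : (0:ℝ) ≤ b - v := by linarith
      have h5 : (b - v) * (F b - F v) ≤ β * (b - v) ^ (α + 1) := by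
        rcases eq_or_lt_of_le hx with hh0 | hh0
        · rw [← hh0, Real.zero_rpow (by positivity : α + 1 ≠ 0)]
          simp
        · have h6 := hmargin b ⟨hbv, hb.2⟩
          have h7 := mul_le_mul_of_nonneg_left h6 hx
          have h8 : (b - v) * (β * (b - v) ^ α) = β * (b - v) ^ (α + 1) := by
            rw [Real.rpow_add_one (ne_of_gt hh0)]; ring
          linarith
      have h8 : β * (b - v) ^ (α + 1) = c b * F v := by
        simp only [hcdef]
        rw [max_eq_left hx, div_mul_cancel₀ _ (ne_of_gt hFv)]
      have h9 : c b * F v ≤ c b * F b := mul_le_mul_of_nonneg_left hFvb (hc_nonneg b)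
      have := hdiffeq ▸ (hle2.trans_eq e4)
      linarith
  -- integrate the pointwise bound
  have hWle : W ≤ ∫ q, h q ∂(ν.prod ρ) := by
    rw [hfub]
    have hint_inner : Integrable (fun b => ∫ p, h (b, p) ∂ρ) ν :=
      hint_prod.integral_prod_left
    have hWconst : W = ∫ _b, W ∂ν := by rw [integral_const]; simp [measure_univ]
    rw [hWconst]
    refine integral_mono_ae (integrable_const W) hint_inner ?_
    filter_upwards [hae] with b hb using hpt b hb
  have := hWle.trans_eq (hJmap.symm.trans hsplit)
  exact this

end Key


/-- If `F` satisfies the margin condition with parameter `α > 0` and constant `β > 0`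
on `[v, 1]` and `F(v) > 0`, then the expected cumulative regret of any bidding strategy
satisfies
`R_T ≤ Σ_{t=1}^T E[(β (B_t − v)_+^{α+1} / F(v))·1{M_t ≤ B_t}] + Σ_{t=1}^T P(B_t < v)`. -/
theorem stmt8
    {Ω : Type*} [MeasurableSpace Ω] (μ : Measure Ω) [IsProbabilityMeasure μ]
    (V M B : ℕ → Ω → ℝ) (v : ℝ) (F : ℝ → ℝ) (α β : ℝ) (T : ℕ)
    (hα : 0 < α) (hβ : 0 < β)
    (hVmeas : ∀ t, Measurable (V t)) (hMmeas : ∀ t, Measurable (M t))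
    (hBmeas : ∀ t, Measurable (B t))
    (hVrange : ∀ t ω, V t ω ∈ Icc (0:ℝ) 1)
    (hMrange : ∀ t ω, M t ω ∈ Icc (0:ℝ) 1)
    (hBrange : ∀ t ω, B t ω ∈ Icc (0:ℝ) 1)
    (hVmean : ∀ t, ∫ ω, V t ω ∂μ = v)
    (hiid : ∀ s t, Measure.map (fun ω => (V s ω, M s ω)) μ
        = Measure.map (fun ω => (V t ω, M t ω)) μ)
    (hpairindep : iIndepFun (fun t ω => (V t ω, M t ω)) μ)
    (hVM : ∀ t, IndepFun (V t) (M t) μ)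
    -- the bid B_t depends only on past observations, hence is independent of (V_t, M_t)
    (hadapted : ∀ t, IndepFun (B t) (fun ω => (V t ω, M t ω)) μ)
    -- F is the cumulative distribution function of the maximal opponent bids
    (hF : ∀ t x, (μ {ω | M t ω ≤ x}).toReal = F x)
    -- margin condition with parameter α and constant β on [v, 1]
    (hmargin : ∀ x ∈ Icc v 1, F x - F v ≤ β * (x - v) ^ α)
    (hFv : 0 < F v) :
    sSup ((fun b => ∑ t ∈ Finset.Icc 1 T,
        ∫ ω, (V t ω - M t ω) * (if M t ω ≤ b then (1:ℝ) else 0) ∂μ) '' Icc (0:ℝ) 1)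
      - ∑ t ∈ Finset.Icc 1 T,
          ∫ ω, (V t ω - M t ω) * (if M t ω ≤ B t ω then (1:ℝ) else 0) ∂μ
    ≤ (∑ t ∈ Finset.Icc 1 T,
        ∫ ω, (β * (max (B t ω - v) 0) ^ (α + 1) / F v)
          * (if M t ω ≤ B t ω then (1:ℝ) else 0) ∂μ)
      + ∑ t ∈ Finset.Icc 1 T, (μ {ω | B t ω < v}).toReal := by
  have hv0 : 0 ≤ v := by
    rw [← hVmean 0]
    exact integral_nonneg fun ω => (hVrange 0 ω).1
  have intV0 : Integrable (V 0) μ :=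
    sp_integrable_of_bdd (hVmeas 0).aestronglyMeasurable (C := 1) fun ω =>
      abs_le.mpr ⟨by linarith [(hVrange 0 ω).1], (hVrange 0 ω).2⟩
  have hv1 : v ≤ 1 := by
    rw [← hVmean 0]
    calc ∫ ω, V 0 ω ∂μ ≤ ∫ _ω, (1:ℝ) ∂μ :=
          integral_mono intV0 (integrable_const 1) fun ω => (hVrange 0 ω).2
      _ = 1 := by simp [measure_univ]
  -- integrability of the relevant pieces
  have intv : ∀ t, ∀ d : ℝ,
      Integrable (fun ω => (v - M t ω) * (if M t ω ≤ d then (1:ℝ) else 0)) μ := by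
    intro t d
    refine sp_integrable_of_bdd
      ((measurable_const.sub (hMmeas t)).mul (sp_ite_meas (hMmeas t) d)).aestronglyMeasurable
      (C := 1) fun ω => ?_
    rw [abs_mul]
    have h1 : |v - M t ω| ≤ 1 :=
      abs_le.mpr ⟨by linarith [(hMrange t ω).2], by linarith [(hMrange t ω).1]⟩
    have h2 : |if M t ω ≤ d then (1:ℝ) else 0| ≤ 1 := by split <;> simp
    calc |v - M t ω| * |if M t ω ≤ d then (1:ℝ) else 0| ≤ 1 * 1 :=
        mul_le_mul h1 h2 (abs_nonneg _) zero_le_one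
      _ = 1 := one_mul 1
  set a := ∑ t ∈ Finset.Icc 1 T,
      ∫ ω, (v - M t ω) * (if M t ω ≤ v then (1:ℝ) else 0) ∂μ with hadef
  have ha0 : 0 ≤ a := by
    apply Finset.sum_nonneg
    intro t _
    apply integral_nonneg
    intro ω
    simp only [Pi.zero_apply]
    by_cases h : M t ω ≤ v
    · simp only [if_pos h, mul_one]; linarith
    · simp [if_neg h]
  have hsup : sSup ((fun b => ∑ t ∈ Finset.Icc 1 T,
      ∫ ω, (V t ω - M t ω) * (if M t ω ≤ b then (1:ℝ) else 0) ∂μ) '' Icc (0:ℝ) 1) ≤ a := by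
    apply Real.sSup_le _ ha0
    rintro x ⟨b, _hb, rfl⟩
    apply Finset.sum_le_sum
    intro t _
    rw [sp_replace_mean (hVmeas t) (hMmeas t) (hVrange t) (hMrange t) (hVmean t) (hVM t) b]
    refine integral_mono (intv t b) (intv t v) fun ω => ?_
    by_cases h1 : M t ω ≤ b <;> by_cases h2 : M t ω ≤ v
    · simp [h1, h2]
    · simp only [if_pos h1, if_neg h2, mul_one, mul_zero]
      linarith [not_le.mp h2]
    · simp only [if_neg h1, if_pos h2, mul_zero, mul_one]
      linarith
    · simp [h1, h2]
  have hkey : ∀ t ∈ Finset.Icc 1 T,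
      ∫ ω, (v - M t ω) * (if M t ω ≤ v then (1:ℝ) else 0) ∂μ
      ≤ (∫ ω, (V t ω - M t ω) * (if M t ω ≤ B t ω then (1:ℝ) else 0) ∂μ)
        + (∫ ω, (β * (max (B t ω - v) 0) ^ (α + 1) / F v)
            * (if M t ω ≤ B t ω then (1:ℝ) else 0) ∂μ)
        + (μ {ω | B t ω < v}).toReal := fun t _ =>
    sp_key hα hβ (hVmeas t) (hMmeas t) (hBmeas t) (hVrange t) (hMrange t) (hBrange t)
      (hVmean t) hv0 hv1 (hVM t) (hadapted t) (hF t) hmargin hFv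
  have hsum := Finset.sum_le_sum hkey
  rw [Finset.sum_add_distrib, Finset.sum_add_distrib] at hsum
  rw [← hadef] at hsum
  linarith [hsup, hsum]
end
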